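/- arXiv:1206.0996 — 6 statements merged into one kernel-verified Lean document; each statement's English description precedes it below -/
import Mathlib

section
/- Let A be an alternative ring. If x is quasiregular with quasiinverse a, and y is quasiregular with quasiinverse b, then (x ∘ y) ∘ b = x and a ∘ (x ∘ y) = y. Together with closure under ∘ and the fact that 0 is a two-sided identity for ∘, this shows the quasiregular elements of A form a loop under the circle operation. -/
/-- The circle operation `x ∘ y = x + y - x * y` on a
(not necessarily associative or unital) ring. -/
def circ {A : Type*} [NonUnitalNonAssocRing A] (x y : A) : A := x + y - x * y

/-- `b` is a quasiinverse of `a`: `a + b - a*b = 0` and `a + b - b*a = 0`. -/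
def IsQuasiinv {A : Type*} [NonUnitalNonAssocRing A] (a b : A) : Prop :=
  a + b - a * b = 0 ∧ a + b - b * a = 0

/-- `a` is quasiregular: it has a quasiinverse. -/
def IsQuasireg {A : Type*} [NonUnitalNonAssocRing A] (a : A) : Prop :=
  ∃ b, IsQuasiinv a b

section Aux

variable {A : Type*} [NonUnitalNonAssocRing A]

/-- Linearized left alternative law. -/
theorem hBl (altl : ∀ x y : A, x * (x * y) = (x * x) * y) (s u t : A) :
    s*(u*t)+u*(s*t) = (s*u)*t+(u*s)*t := by
  linear_combination (norm := ((try simp only [mul_add, add_mul, mul_sub, sub_mul, mul_neg, neg_mul]); abel)) altl (s+u) t - altl s t - altl u t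

/-- Linearized right alternative law. -/
theorem hDr (altr : ∀ x y : A, (y * x) * x = y * (x * x)) (t s u : A) :
    (t*s)*u+(t*u)*s = t*(s*u)+t*(u*s) := by
  linear_combination (norm := ((try simp only [mul_add, add_mul, mul_sub, sub_mul, mul_neg, neg_mul]); abel)) altr (s+u) t - altr s t - altr u t

/-- Core lemma: if `p*q = q*p = p+q` then `q` associates past `p` on the right. -/
theorem qasc1 (altl : ∀ x y : A, x * (x * y) = (x * x) * y)
    (altr : ∀ x y : A, (y * x) * x = y * (x * x))
    (p q : A) (h1 : p * q = p + q) (w : A) : (w * p) * q = w * (p * q) := by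
  have hk0 : (w * ((p * q) * q)) = (w * ((p + q) * q)) := by rw [h1]
  have hk1 : ((w * (p * q)) * q) = ((w * (p + q)) * q) := by rw [h1]
  have hk2 : (w * (p * ((p * q) * q))) = (w * (p * ((p + q) * q))) := by rw [h1]
  have hk3 : (p * (w * ((p * q) * q))) = (p * (w * ((p + q) * q))) := by rw [h1]
  have hk4 : (p * (((p * q) * q) * w)) = (p * (((p + q) * q) * w)) := by rw [h1]
  have hk5 : ((w * p) * ((p * q) * q)) = ((w * p) * ((p + q) * q)) := by rw [h1]
  have hk6 : ((w * (p * (p * q))) * q) = ((w * (p * (p + q))) * q) := by rw [h1]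
  have hk7 : ((p * ((p * q) * w)) * q) = ((p * ((p + q) * w)) * q) := by rw [h1]
  have hk8 : ((p * ((p * q) * q)) * w) = ((p * ((p + q) * q)) * w) := by rw [h1]
  have hk9 : ((p * (w * (p * q))) * q) = ((p * (w * (p + q))) * q) := by rw [h1]
  have hk10 : (((p * (p * q)) * w) * q) = (((p * (p + q)) * w) * q) := by rw [h1]
  have hk11 : (((w * p) * (p * q)) * q) = (((w * p) * (p + q)) * q) := by rw [h1]
  have hk12 : ((p * (p * w)) * q) = (((p * p) * w) * q) := by rw [altl p w]
  have hk13 : (((w * p) * p) * (q * q)) = ((w * (p * p)) * (q * q)) := by rw [altr p w]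
  have hk14 : ((((w * p) * p) * q) * q) = (((w * (p * p)) * q) * q) := by rw [altr p w]
  have hk15 : ((p * (p * q)) * w) = (((p * p) * q) * w) := by rw [altl p q]
  have hk16 : (w * (p * (p * q))) = (w * ((p * p) * q)) := by rw [altl p q]
  have hk17 : (((p * (p * q)) * w) * q) = ((((p * p) * q) * w) * q) := by rw [altl p q]
  have hk18 : ((w * (p * (p * q))) * q) = ((w * ((p * p) * q)) * q) := by rw [altl p q]
  have hk19 : (p * (p * (q * w))) = ((p * p) * (q * w)) := by rw [altl p (q * w)]
  have hk20 : ((p * (p * (q * w))) * q) = (((p * p) * (q * w)) * q) := by rw [altl p (q * w)]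
  have hk21 : ((p * (p * (q * q))) * w) = (((p * p) * (q * q)) * w) := by rw [altl p (q * q)]
  have hk22 : (w * (p * (p * (q * q)))) = (w * ((p * p) * (q * q))) := by rw [altl p (q * q)]
  have hk23 : (p * (p * ((q * q) * w))) = ((p * p) * ((q * q) * w)) := by rw [altl p ((q * q) * w)]
  have hk24 : ((w * q) * q) = (w * (q * q)) := by rw [altr q w]
  have hk25 : (w * ((p * q) * q)) = (w * (p * (q * q))) := by rw [altr q p]
  have hk26 : (w * (p * ((p * q) * q))) = (w * (p * (p * (q * q)))) := by rw [altr q p]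
  have hk27 : (p * (((p * q) * q) * w)) = (p * ((p * (q * q)) * w)) := by rw [altr q p]
  have hk28 : (p * (w * ((p * q) * q))) = (p * (w * (p * (q * q)))) := by rw [altr q p]
  have hk29 : ((p * ((p * q) * q)) * w) = ((p * (p * (q * q))) * w) := by rw [altr q p]
  have hk30 : ((w * p) * ((p * q) * q)) = ((w * p) * (p * (q * q))) := by rw [altr q p]
  have hk31 : (((w * p) * q) * q) = ((w * p) * (q * q)) := by rw [altr q (w * p)]
  have hk32 : (((p * w) * q) * q) = ((p * w) * (q * q)) := by rw [altr q (p * w)]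
  have hk33 : (((p * (w * p)) * q) * q) = ((p * (w * p)) * (q * q)) := by rw [altr q (p * (w * p))]
  have hk34 : (p * (w * (p * q) + p * (w * q))) = (p * ((w * p) * q + (p * w) * q)) := by rw [hBl altl w p q]
  have hk35 : ((p * (w * (p * q) + p * (w * q))) * q) = ((p * ((w * p) * q + (p * w) * q)) * q) := by rw [hBl altl w p q]
  have hk36 : (p * (w * (p * (q * q)) + p * (w * (q * q)))) = (p * ((w * p) * (q * q) + (p * w) * (q * q))) := by rw [hBl altl w p (q * q)]
  have hk37 : (((p * w) * q + (p * q) * w) * q) = ((p * (w * q) + p * (q * w)) * q) := by rw [hDr altr p w q]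
  have hk38 : (p * ((p * w) * q + (p * q) * w)) = (p * (p * (w * q) + p * (q * w))) := by rw [hDr altr p w q]
  have hk39 : ((p * ((p * w) * q + (p * q) * w)) * q) = ((p * (p * (w * q) + p * (q * w))) * q) := by rw [hDr altr p w q]
  have hk40 : (((p * p) * w) * q + ((p * p) * q) * w) = ((p * p) * (w * q) + (p * p) * (q * w)) := by rw [hDr altr (p * p) w q]
  have hk41 : ((((p * p) * w) * q + ((p * p) * q) * w) * q) = (((p * p) * (w * q) + (p * p) * (q * w)) * q) := by rw [hDr altr (p * p) w q]
  have hk42 : (w * ((p * p) * q) + (p * p) * (w * q)) = ((w * (p * p)) * q + ((p * p) * w) * q) := by rw [hBl altl w (p * p) q]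
  have hk43 : ((w * ((p * p) * q) + (p * p) * (w * q)) * q) = (((w * (p * p)) * q + ((p * p) * w) * q) * q) := by rw [hBl altl w (p * p) q]
  have hk44 : (w * ((p * p) * (q * q)) + (p * p) * (w * (q * q))) = ((w * (p * p)) * (q * q) + ((p * p) * w) * (q * q)) := by rw [hBl altl w (p * p) (q * q)]
  have hk45 : ((p * w) * (q * q) + (p * (q * q)) * w) = (p * (w * (q * q)) + p * ((q * q) * w)) := by rw [hDr altr p w (q * q)]
  have hk46 : (p * ((p * w) * (q * q) + (p * (q * q)) * w)) = (p * (p * (w * (q * q)) + p * ((q * q) * w))) := by rw [hDr altr p w (q * q)]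
  have hk47 : (((p * p) * w) * (q * q) + ((p * p) * (q * q)) * w) = ((p * p) * (w * (q * q)) + (p * p) * ((q * q) * w)) := by rw [hDr altr (p * p) w (q * q)]
  have hk48 : (p * ((w * p) * q) + (w * p) * (p * q)) = ((p * (w * p)) * q + ((w * p) * p) * q) := by rw [hBl altl p (w * p) q]
  have hk49 : ((p * ((w * p) * q) + (w * p) * (p * q)) * q) = (((p * (w * p)) * q + ((w * p) * p) * q) * q) := by rw [hBl altl p (w * p) q]
  have hk50 : (p * ((w * p) * (q * q)) + (w * p) * (p * (q * q))) = ((p * (w * p)) * (q * q) + ((w * p) * p) * (q * q)) := by rw [hBl altl p (w * p) (q * q)]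
  linear_combination (norm := (simp only [mul_add, add_mul, mul_sub, sub_mul, mul_neg, neg_mul]; abel)) hk0 - hk1 + hk2 - hk3 - hk4 - hk5 - hk6 + hk7 + hk8 + hk9 - hk10 + hk11 + hk12 + hk13 - hk14 + hk15 + hk16 + hk17 + hk18 - hk19 - hk20 - hk21 - hk22 + hk23 - hk24 - hk25 - hk26 + hk27 + hk28 - hk29 + hk30 + hk31 + hk32 - hk33 - hk34 - hk35 + hk36 - hk37 - hk38 - hk39 + hk40 + hk41 + hk42 + hk43 - hk44 + hk45 + hk46 - hk47 - hk48 - hk49 + hk50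

theorem qasc2 (altl : ∀ x y : A, x * (x * y) = (x * x) * y)
    (altr : ∀ x y : A, (y * x) * x = y * (x * x))
    (p q : A) (h1 : p * q = p + q) (w : A) : (p * w) * q = p * (w * q) := by
  linear_combination (norm := ((try simp only [mul_add, add_mul, mul_sub, sub_mul, mul_neg, neg_mul]); abel)) - hBl altl w p q - qasc1 altl altr p q h1 w

theorem qasc3 (altl : ∀ x y : A, x * (x * y) = (x * x) * y)
    (altr : ∀ x y : A, (y * x) * x = y * (x * x))
    (p q : A) (h1 : p * q = p + q) (w : A) : (p * q) * w = p * (q * w) := by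
  linear_combination (norm := ((try simp only [mul_add, add_mul, mul_sub, sub_mul, mul_neg, neg_mul]); abel)) hDr altr p q w - qasc2 altl altr p q h1 w

theorem qca (u v z : A) (h : (u*v)*z = u*(v*z)) :
    circ (circ u v) z = circ u (circ v z) := by
  simp only [circ]
  linear_combination (norm := ((try simp only [mul_add, add_mul, mul_sub, sub_mul, mul_neg, neg_mul]); abel)) h

theorem qcz1 (z : A) : circ 0 z = z := by simp [circ]

theorem qcz2 (z : A) : circ z 0 = z := by simp [circ]

theorem qcpq (p q : A) (h1 : p * q = p + q) : circ p q = 0 := by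
  rw [circ, h1, sub_self]

/-- Middle Moufang identity for the circle operation. -/
theorem qmid (altl : ∀ x y : A, x * (x * y) = (x * x) * y)
    (altr : ∀ x y : A, (y * x) * x = y * (x * x))
    (x y z : A) : circ (circ x y) (circ z x) = circ x (circ (circ y z) x) := by
  simp only [circ]
  have hm0 : ((x * (x * y)) * z) = (((x * x) * y) * z) := by rw [altl x y]
  have hm1 : ((y * x) * x) = (y * (x * x)) := by rw [altr x y]
  have hm2 : (((y * x) * x) * z) = ((y * (x * x)) * z) := by rw [altr x y]
  have hm3 : ((x * (x * z)) * y) = (((x * x) * z) * y) := by rw [altl x z]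
  have hm4 : (y * (x * (x * z))) = (y * ((x * x) * z)) := by rw [altl x z]
  have hm5 : (x * (x * (y * z))) = ((x * x) * (y * z)) := by rw [altl x (y * z)]
  have hm6 : (x * (x * (z * y))) = ((x * x) * (z * y)) := by rw [altl x (z * y)]
  have hm7 : (x * (y * x) + y * (x * x)) = ((x * y) * x + (y * x) * x) := by rw [hBl altl x y x]
  have hm8 : ((x * (y * x) + y * (x * x)) * z) = (((x * y) * x + (y * x) * x) * z) := by rw [hBl altl x y x]
  have hm9 : (x * (y * z) + y * (x * z)) = ((x * y) * z + (y * x) * z) := by rw [hBl altl x y z]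
  have hm10 : ((x * (y * z) + y * (x * z)) * x) = (((x * y) * z + (y * x) * z) * x) := by rw [hBl altl x y z]
  have hm11 : (x * (x * (y * z) + y * (x * z))) = (x * ((x * y) * z + (y * x) * z)) := by rw [hBl altl x y z]
  have hm12 : (x * ((z * x) * y + (z * y) * x)) = (x * (z * (x * y) + z * (y * x))) := by rw [hDr altr z x y]
  have hm13 : (x * (y * (z * x)) + y * (x * (z * x))) = ((x * y) * (z * x) + (y * x) * (z * x)) := by rw [hBl altl x y (z * x)]
  have hm14 : (y * ((x * x) * z + (x * z) * x)) = (y * (x * (x * z) + x * (z * x))) := by rw [hDr altr x x z]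
  have hm15 : (x * (x * (z * y) + z * (x * y))) = (x * ((x * z) * y + (z * x) * y)) := by rw [hBl altl x z y]
  have hm16 : ((y * x) * z + (y * z) * x) = (y * (x * z) + y * (z * x)) := by rw [hDr altr y x z]
  have hm17 : (x * ((y * x) * z + (y * z) * x)) = (x * (y * (x * z) + y * (z * x))) := by rw [hDr altr y x z]
  have hm18 : (((y * x) * x) * z + ((y * x) * z) * x) = ((y * x) * (x * z) + (y * x) * (z * x)) := by rw [hDr altr (y * x) x z]
  have hm19 : (x * ((x * y) * z) + (x * y) * (x * z)) = ((x * (x * y)) * z + ((x * y) * x) * z) := by rw [hBl altl x (x * y) z]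
  have hm20 : (x * ((y * x) * z) + (y * x) * (x * z)) = ((x * (y * x)) * z + ((y * x) * x) * z) := by rw [hBl altl x (y * x) z]
  have hm21 : ((x * x) * (z * y) + (x * (z * y)) * x) = (x * (x * (z * y)) + x * ((z * y) * x)) := by rw [hDr altr x x (z * y)]
  have hm22 : (((x * y) * z + (x * z) * y) * x) = ((x * (y * z) + x * (z * y)) * x) := by rw [hDr altr x y z]
  have hm23 : (x * ((x * y) * z + (x * z) * y)) = (x * (x * (y * z) + x * (z * y))) := by rw [hDr altr x y z]
  have hm24 : (((x * x) * y) * z + ((x * x) * z) * y) = ((x * x) * (y * z) + (x * x) * (z * y)) := by rw [hDr altr (x * x) y z]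
  have hm25 : (y * ((x * z) * x) + (x * z) * (y * x)) = ((y * (x * z)) * x + ((x * z) * y) * x) := by rw [hBl altl y (x * z) x]
  have hm26 : ((x * y) * (x * z) + (x * (x * z)) * y) = (x * (y * (x * z)) + x * ((x * z) * y)) := by rw [hDr altr x y (x * z)]
  have hm27 : ((x * z) * (y * x) + (x * (y * x)) * z) = (x * (z * (y * x)) + x * ((y * x) * z)) := by rw [hDr altr x z (y * x)]
  linear_combination (norm := (simp only [mul_add, add_mul, mul_sub, sub_mul, mul_neg, neg_mul]; abel)) hm0 + hm0 - hm1 - hm2 - hm2 + hm3 + hm3 + hm4 - hm5 - hm5 - hm6 - hm6 - hm6 - hm7 - hm8 - hm8 - hm9 - hm10 - hm11 - hm12 + hm13 + hm14 - hm15 - hm16 + hm17 - hm18 + hm19 + hm19 - hm20 - hm21 - hm22 - hm23 - hm23 - hm23 + hm24 + hm24 - hm25 - hm26 - hm26 + hm27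

/-- Left inverse property. -/
theorem qipL (altl : ∀ x y : A, x * (x * y) = (x * x) * y)
    (altr : ∀ x y : A, (y * x) * x = y * (x * x))
    (p q : A) (h1 : p * q = p + q) (h2 : q * p = p + q) (z : A) :
    circ q (circ p z) = z := by
  have h1' : q * p = q + p := h2.trans (add_comm p q)
  rw [← qca q p z (qasc3 altl altr q p h1' z), qcpq q p h1', qcz1]

/-- Right inverse property. -/
theorem qipR (altl : ∀ x y : A, x * (x * y) = (x * x) * y)
    (altr : ∀ x y : A, (y * x) * x = y * (x * x))
    (p q : A) (h1 : p * q = p + q) (z : A) :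
    circ (circ z p) q = z := by
  rw [qca z p q (qasc1 altl altr p q h1 z), qcpq p q h1, qcz2]

theorem qqi (s t : A) (e1 : circ s t = 0) (e2 : circ t s = 0) : IsQuasiinv s t := by
  constructor
  · simpa only [circ] using e1
  · have h := e2
    simp only [circ] at h
    linear_combination (norm := ((try simp only [mul_add, add_mul, mul_sub, sub_mul, mul_neg, neg_mul]); abel)) h

theorem qsymm (s t : A) (h : IsQuasiinv s t) : IsQuasiinv t s := by
  obtain ⟨h1, h2⟩ := h
  constructor
  · linear_combination (norm := ((try simp only [mul_add, add_mul, mul_sub, sub_mul, mul_neg, neg_mul]); abel)) h2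
  · linear_combination (norm := ((try simp only [mul_add, add_mul, mul_sub, sub_mul, mul_neg, neg_mul]); abel)) h1

end Aux

/-- In an alternative ring, if `x` is quasiregular with quasiinverse `a`
and `y` is quasiregular with quasiinverse `b`, then `(x ∘ y) ∘ b = x` and
`a ∘ (x ∘ y) = y`.  Together with closure of the quasiregular elements under `∘` and
the fact that `0` is a two-sided identity for `∘`, this shows that the quasiregular
elements of `A` form a loop under the circle operation. -/
theorem circ_div {A : Type*} [NonUnitalNonAssocRing A]
    (altl : ∀ x y : A, x * (x * y) = (x * x) * y)
    (altr : ∀ x y : A, (y * x) * x = y * (x * x))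
    (x a y b : A) (hxa : IsQuasiinv x a) (hyb : IsQuasiinv y b) :
    circ (circ x y) b = x ∧ circ a (circ x y) = y ∧
      (∀ z : A, circ 0 z = z ∧ circ z 0 = z) ∧
      (∀ u v : A, IsQuasireg u → IsQuasireg v → IsQuasireg (circ u v)) ∧
      (∀ u v : A, IsQuasireg u → IsQuasireg v →
        (∃! w : A, IsQuasireg w ∧ circ u w = v) ∧
        (∃! w : A, IsQuasireg w ∧ circ w u = v)) := by
  obtain ⟨hxa1, hxa2⟩ := hxa
  obtain ⟨hyb1, hyb2⟩ := hyb
  have hx1 : x * a = x + a := (sub_eq_zero.mp hxa1).symm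
  have hx2 : a * x = x + a := (sub_eq_zero.mp hxa2).symm
  have hy1 : y * b = y + b := (sub_eq_zero.mp hyb1).symm
  have closure : ∀ u v : A, IsQuasireg u → IsQuasireg v → IsQuasireg (circ u v) := by
    rintro u v ⟨u', hu⟩ ⟨v', hv⟩
    have hu1 : u * u' = u + u' := (sub_eq_zero.mp hu.1).symm
    have hu2 : u' * u = u + u' := (sub_eq_zero.mp hu.2).symm
    have hv1 : v * v' = v + v' := (sub_eq_zero.mp hv.1).symm
    have hv2 : v' * v = v + v' := (sub_eq_zero.mp hv.2).symm
    have hu2c : u' * u = u' + u := hu2.trans (add_comm u u')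
    have hv2c : v' * v = v' + v := hv2.trans (add_comm v v')
    have hv1c : v * v' = v' + v := hv1.trans (add_comm v v')
    have e1 : circ (circ u v) (circ v' u') = 0 := by
      have t1 : circ u' (circ u (circ u v)) = circ u v :=
        qipL altl altr u u' hu1 hu2 (circ u v)
      calc circ (circ u v) (circ v' u')
          = circ (circ u' (circ u (circ u v))) (circ v' u') := by rw [t1]
        _ = circ u' (circ (circ (circ u (circ u v)) v') u') :=
            qmid altl altr u' (circ u (circ u v)) v'
        _ = circ u' (circ (circ (circ (circ u u) v) v') u') := by
            rw [← qca u u v (altl u v).symm]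
        _ = circ u' (circ (circ u u) u') := by
            rw [qipR altl altr v v' hv1 (circ u u)]
        _ = circ u' (circ u (circ u u')) := by
            rw [qca u u u' (altl u u').symm]
        _ = circ u' (circ u 0) := by rw [qcpq u u' hu1]
        _ = circ u' u := by rw [qcz2]
        _ = 0 := qcpq u' u hu2c
    have e2 : circ (circ v' u') (circ u v) = 0 := by
      have t1' : circ v (circ v' (circ v' u')) = circ v' u' :=
        qipL altl altr v' v hv2c hv1c (circ v' u')
      calc circ (circ v' u') (circ u v)
          = circ (circ v (circ v' (circ v' u'))) (circ u v) := by rw [t1']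
        _ = circ v (circ (circ (circ v' (circ v' u')) u) v) :=
            qmid altl altr v (circ v' (circ v' u')) u
        _ = circ v (circ (circ (circ (circ v' v') u') u) v) := by
            rw [← qca v' v' u' (altl v' u').symm]
        _ = circ v (circ (circ v' v') v) := by
            rw [qipR altl altr u' u hu2c (circ v' v')]
        _ = circ v (circ v' (circ v' v)) := by
            rw [qca v' v' v (altl v' v).symm]
        _ = circ v (circ v' 0) := by rw [qcpq v' v hv2c]
        _ = circ v v' := by rw [qcz2]
        _ = 0 := qcpq v v' hv1
    exact ⟨circ v' u', qqi _ _ e1 e2⟩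
  refine ⟨qipR altl altr y b hy1 x, qipL altl altr x a hx1 hx2 y,
    fun z => ⟨qcz1 z, qcz2 z⟩, closure, ?_⟩
  rintro u v hu hv
  obtain ⟨u', hui⟩ := hu
  have hu1 : u * u' = u + u' := (sub_eq_zero.mp hui.1).symm
  have hu2 : u' * u = u + u' := (sub_eq_zero.mp hui.2).symm
  have hu1c : u * u' = u' + u := hu1.trans (add_comm u u')
  have hu2c : u' * u = u' + u := hu2.trans (add_comm u u')
  have hu'reg : IsQuasireg u' := ⟨u, qsymm u u' hui⟩
  constructor
  · refine ⟨circ u' v, ⟨closure u' v hu'reg hv, qipL altl altr u' u hu2c hu1c v⟩, ?_⟩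
    rintro w ⟨-, hw⟩
    rw [← hw]
    exact (qipL altl altr u u' hu1 hu2 w).symm
  · refine ⟨circ v u', ⟨closure v u' hv hu'reg, qipR altl altr u' u hu2c v⟩, ?_⟩
    rintro w ⟨-, hw⟩
    rw [← hw]
    exact (qipR altl altr u u' hu1 w).symm
end

section
/- In any alternative ring A, the circle operation satisfies the Moufang identity: for all x, y, z ∈ A, ((x ∘ y) ∘ x) ∘ z = x ∘ (y ∘ (x ∘ z)). Consequently (Proposition 1.4) the set J(A) of quasiregular elements of A is a Moufang loop under the circle operation with identity element 0. -/
private lemma cmouf {A : Type*} [NonUnitalNonAssocRing A]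
    (altl : ∀ x y : A, x * (x * y) = (x * x) * y)
    (altr : ∀ x y : A, (y * x) * x = y * (x * x)) (x y z : A) :
    circ (circ (circ x y) x) z = circ x (circ y (circ x z)) := by
  have g0 : ((x * (x * y)) * z) = (((x * x) * y) * z) := by rw [altl x y]
  have g1 : (x * (x * z)) = ((x * x) * z) := by rw [altl x z]
  have g2 : ((x * (x * z)) * y) = (((x * x) * z) * y) := by rw [altl x z]
  have g3 : (x * (x * (y * z))) = ((x * x) * (y * z)) := by rw [altl x (y * z)]
  have g4 : (x * (x * (z * y))) = ((x * x) * (z * y)) := by rw [altl x (z * y)]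
  have g5 : ((x + y) * ((x + y) * x)) = (((x + y) * (x + y)) * x) := by rw [altl (x + y) x]
  have g6 : (x * (x * x)) = ((x * x) * x) := by rw [altl x x]
  have g7 : (y * (y * x)) = ((y * y) * x) := by rw [altl y x]
  have g8 : (((x + y) * ((x + y) * x)) * z) = ((((x + y) * (x + y)) * x) * z) := by rw [altl (x + y) x]
  have g9 : ((x * (x * x)) * z) = (((x * x) * x) * z) := by rw [altl x x]
  have g10 : ((y * (y * x)) * z) = (((y * y) * x) * z) := by rw [altl y x]
  have g11 : ((x + y) * ((x + y) * z)) = (((x + y) * (x + y)) * z) := by rw [altl (x + y) z]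
  have g12 : (y * (y * z)) = ((y * y) * z) := by rw [altl y z]
  have g13 : (((x + y) * ((x + y) * z)) * x) = ((((x + y) * (x + y)) * z) * x) := by rw [altl (x + y) z]
  have g14 : ((x * (x * z)) * x) = (((x * x) * z) * x) := by rw [altl x z]
  have g15 : ((y * (y * z)) * x) = (((y * y) * z) * x) := by rw [altl y z]
  have g16 : (x * ((x + y) * ((x + y) * z))) = (x * (((x + y) * (x + y)) * z)) := by rw [altl (x + y) z]
  have g17 : (x * (x * (x * z))) = (x * ((x * x) * z)) := by rw [altl x z]
  have g18 : (x * (y * (y * z))) = (x * ((y * y) * z)) := by rw [altl y z]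
  have g19 : (y * ((x + z) * ((x + z) * x))) = (y * (((x + z) * (x + z)) * x)) := by rw [altl (x + z) x]
  have g20 : (y * (x * (x * x))) = (y * ((x * x) * x)) := by rw [altl x x]
  have g21 : (y * (z * (z * x))) = (y * ((z * z) * x)) := by rw [altl z x]
  have g22 : (x * ((x + z) * ((x + z) * y))) = (x * (((x + z) * (x + z)) * y)) := by rw [altl (x + z) y]
  have g23 : (x * (x * (x * y))) = (x * ((x * x) * y)) := by rw [altl x y]
  have g24 : (x * (z * (z * y))) = (x * ((z * z) * y)) := by rw [altl z y]
  have g25 : (x * ((y + z) * ((y + z) * x))) = (x * (((y + z) * (y + z)) * x)) := by rw [altl (y + z) x]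
  have g26 : (x * (y * (y * x))) = (x * ((y * y) * x)) := by rw [altl y x]
  have g27 : (x * (z * (z * x))) = (x * ((z * z) * x)) := by rw [altl z x]
  have g28 : ((x + y) * ((x + y) * (z * x))) = (((x + y) * (x + y)) * (z * x)) := by rw [altl (x + y) (z * x)]
  have g29 : (x * (x * (z * x))) = ((x * x) * (z * x)) := by rw [altl x (z * x)]
  have g30 : (y * (y * (z * x))) = ((y * y) * (z * x)) := by rw [altl y (z * x)]
  have g31 : ((x + (x * y)) * ((x + (x * y)) * z)) = (((x + (x * y)) * (x + (x * y))) * z) := by rw [altl (x + (x * y)) z]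
  have g32 : ((x * y) * ((x * y) * z)) = (((x * y) * (x * y)) * z) := by rw [altl (x * y) z]
  have g33 : ((x + (x * z)) * ((x + (x * z)) * y)) = (((x + (x * z)) * (x + (x * z))) * y) := by rw [altl (x + (x * z)) y]
  have g34 : (x * (x * y)) = ((x * x) * y) := by rw [altl x y]
  have g35 : ((x * z) * ((x * z) * y)) = (((x * z) * (x * z)) * y) := by rw [altl (x * z) y]
  have g36 : ((x + (y * x)) * ((x + (y * x)) * z)) = (((x + (y * x)) * (x + (y * x))) * z) := by rw [altl (x + (y * x)) z]
  have g37 : ((y * x) * ((y * x) * z)) = (((y * x) * (y * x)) * z) := by rw [altl (y * x) z]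
  have g38 : ((x + (y * z)) * ((x + (y * z)) * x)) = (((x + (y * z)) * (x + (y * z))) * x) := by rw [altl (x + (y * z)) x]
  have g39 : ((y * z) * ((y * z) * x)) = (((y * z) * (y * z)) * x) := by rw [altl (y * z) x]
  have g40 : ((y + (x * z)) * ((y + (x * z)) * x)) = (((y + (x * z)) * (y + (x * z))) * x) := by rw [altl (y + (x * z)) x]
  have g41 : ((x * z) * ((x * z) * x)) = (((x * z) * (x * z)) * x) := by rw [altl (x * z) x]
  have g42 : ((y * x) * x) = (y * (x * x)) := by rw [altr x y]
  have g43 : (((y * x) * x) * z) = ((y * (x * x)) * z) := by rw [altr x y]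
  have g44 : (y * ((z * x) * x)) = (y * (z * (x * x))) := by rw [altr x z]
  have g45 : (((y * z) * x) * x) = ((y * z) * (x * x)) := by rw [altr x (y * z)]
  have g46 : (x * ((z * (x + y)) * (x + y))) = (x * (z * ((x + y) * (x + y)))) := by rw [altr (x + y) z]
  have g47 : (x * ((z * x) * x)) = (x * (z * (x * x))) := by rw [altr x z]
  have g48 : (x * ((z * y) * y)) = (x * (z * (y * y))) := by rw [altr y z]
  have g49 : (((x * z) * (x + y)) * (x + y)) = ((x * z) * ((x + y) * (x + y))) := by rw [altr (x + y) (x * z)]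
  have g50 : (((x * z) * x) * x) = ((x * z) * (x * x)) := by rw [altr x (x * z)]
  have g51 : (((x * z) * y) * y) = ((x * z) * (y * y)) := by rw [altr y (x * z)]
  have g52 : (((x * y) * (x + z)) * (x + z)) = ((x * y) * ((x + z) * (x + z))) := by rw [altr (x + z) (x * y)]
  have g53 : (((x * y) * x) * x) = ((x * y) * (x * x)) := by rw [altr x (x * y)]
  have g54 : (((x * y) * z) * z) = ((x * y) * (z * z)) := by rw [altr z (x * y)]
  have g55 : (((y * x) * (x + z)) * (x + z)) = ((y * x) * ((x + z) * (x + z))) := by rw [altr (x + z) (y * x)]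
  have g56 : (((y * x) * x) * x) = ((y * x) * (x * x)) := by rw [altr x (y * x)]
  have g57 : (((y * x) * z) * z) = ((y * x) * (z * z)) := by rw [altr z (y * x)]
  have g58 : (((x * x) * (y + z)) * (y + z)) = ((x * x) * ((y + z) * (y + z))) := by rw [altr (y + z) (x * x)]
  have g59 : (((x * x) * y) * y) = ((x * x) * (y * y)) := by rw [altr y (x * x)]
  have g60 : (((x * x) * z) * z) = ((x * x) * (z * z)) := by rw [altr z (x * x)]
  linear_combination (norm := (simp only [circ, mul_add, add_mul, mul_sub, sub_mul]; abel1)) g0 - g1 + g2 - g3 - g4 - g5 + g6 + g7 + g8 - g9 - g10 - g11 + g1 + g12 + g13 - g14 - g15 + g16 - g17 - g18 + g19 - g20 - g21 + g22 - g23 - g24 + g25 - g26 - g27 - g28 + g29 + g30 + g31 - g1 - g32 + g33 - g34 - g35 + g36 - g1 - g37 + g38 - g6 - g39 + g40 - g7 - g41 - g42 + g43 + g44 + g45 + g46 - g47 - g48 + g49 - g50 - g51 + g52 - g53 - g54 + g55 - g56 - g57 + g58 - g59 - g60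

private lemma cmoufr {A : Type*} [NonUnitalNonAssocRing A]
    (altl : ∀ x y : A, x * (x * y) = (x * x) * y)
    (altr : ∀ x y : A, (y * x) * x = y * (x * x)) (x y z : A) :
    circ (circ (circ z x) y) x = circ z (circ (circ x y) x) := by
  have g0 : (z * ((x + y) * ((x + y) * x))) = (z * (((x + y) * (x + y)) * x)) := by rw [altl (x + y) x]
  have g1 : (z * (x * (x * x))) = (z * ((x * x) * x)) := by rw [altl x x]
  have g2 : (z * (y * (y * x))) = (z * ((y * y) * x)) := by rw [altl y x]
  have g3 : (((y + z) * ((y + z) * x)) * x) = ((((y + z) * (y + z)) * x) * x) := by rw [altl (y + z) x]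
  have g4 : ((y * (y * x)) * x) = (((y * y) * x) * x) := by rw [altl y x]
  have g5 : ((z * (z * x)) * x) = (((z * z) * x) * x) := by rw [altl z x]
  have g6 : ((y + z) * ((y + z) * (x * x))) = (((y + z) * (y + z)) * (x * x)) := by rw [altl (y + z) (x * x)]
  have g7 : (y * (y * (x * x))) = ((y * y) * (x * x)) := by rw [altl y (x * x)]
  have g8 : (z * (z * (x * x))) = ((z * z) * (x * x)) := by rw [altl z (x * x)]
  have g9 : ((y + (z * x)) * ((y + (z * x)) * x)) = (((y + (z * x)) * (y + (z * x))) * x) := by rw [altl (y + (z * x)) x]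
  have g10 : (y * (y * x)) = ((y * y) * x) := by rw [altl y x]
  have g11 : ((z * x) * ((z * x) * x)) = (((z * x) * (z * x)) * x) := by rw [altl (z * x) x]
  have g12 : (z * ((y * x) * x)) = (z * (y * (x * x))) := by rw [altr x y]
  have g13 : ((z * x) * x) = (z * (x * x)) := by rw [altr x z]
  have g14 : (y * ((z * x) * x)) = (y * (z * (x * x))) := by rw [altr x z]
  have g15 : (((y * z) * x) * x) = ((y * z) * (x * x)) := by rw [altr x (y * z)]
  have g16 : (((z * y) * x) * x) = ((z * y) * (x * x)) := by rw [altr x (z * y)]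
  have g17 : ((z * (x + y)) * (x + y)) = (z * ((x + y) * (x + y))) := by rw [altr (x + y) z]
  have g18 : ((z * y) * y) = (z * (y * y)) := by rw [altr y z]
  have g19 : ((z * (x + (y * x))) * (x + (y * x))) = (z * ((x + (y * x)) * (x + (y * x)))) := by rw [altr (x + (y * x)) z]
  have g20 : ((z * (y * x)) * (y * x)) = (z * ((y * x) * (y * x))) := by rw [altr (y * x) z]
  linear_combination (norm := (simp only [circ, mul_add, add_mul, mul_sub, sub_mul]; abel1)) -g0 + g1 + g2 + g3 - g4 - g5 - g6 + g7 + g8 + g9 - g10 - g11 - g12 - g12 + g13 - g14 + g15 + g16 + g17 - g13 - g18 - g19 + g13 + g20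

private lemma cmmouf {A : Type*} [NonUnitalNonAssocRing A]
    (altl : ∀ x y : A, x * (x * y) = (x * x) * y)
    (altr : ∀ x y : A, (y * x) * x = y * (x * x)) (x y z : A) :
    circ (circ x y) (circ z x) = circ (circ x (circ y z)) x := by
  have g0 : (z * ((x + y) * ((x + y) * x))) = (z * (((x + y) * (x + y)) * x)) := by rw [altl (x + y) x]
  have g1 : (z * (x * (x * x))) = (z * ((x * x) * x)) := by rw [altl x x]
  have g2 : (z * (y * (y * x))) = (z * ((y * y) * x)) := by rw [altl y x]
  have g3 : ((x + y) * ((x + y) * z)) = (((x + y) * (x + y)) * z) := by rw [altl (x + y) z]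
  have g4 : (x * (x * z)) = ((x * x) * z) := by rw [altl x z]
  have g5 : (y * (y * z)) = ((y * y) * z) := by rw [altl y z]
  have g6 : (((x + y) * ((x + y) * z)) * x) = ((((x + y) * (x + y)) * z) * x) := by rw [altl (x + y) z]
  have g7 : ((x * (x * z)) * x) = (((x * x) * z) * x) := by rw [altl x z]
  have g8 : ((y * (y * z)) * x) = (((y * y) * z) * x) := by rw [altl y z]
  have g9 : ((x + z) * ((x + z) * x)) = (((x + z) * (x + z)) * x) := by rw [altl (x + z) x]
  have g10 : (x * (x * x)) = ((x * x) * x) := by rw [altl x x]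
  have g11 : (z * (z * x)) = ((z * z) * x) := by rw [altl z x]
  have g12 : (((y + z) * ((y + z) * x)) * x) = ((((y + z) * (y + z)) * x) * x) := by rw [altl (y + z) x]
  have g13 : ((y * (y * x)) * x) = (((y * y) * x) * x) := by rw [altl y x]
  have g14 : ((z * (z * x)) * x) = (((z * z) * x) * x) := by rw [altl z x]
  have g15 : ((y + z) * ((y + z) * (x * x))) = (((y + z) * (y + z)) * (x * x)) := by rw [altl (y + z) (x * x)]
  have g16 : (y * (y * (x * x))) = ((y * y) * (x * x)) := by rw [altl y (x * x)]
  have g17 : (z * (z * (x * x))) = ((z * z) * (x * x)) := by rw [altl z (x * x)]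
  have g18 : ((y + (z * x)) * ((y + (z * x)) * x)) = (((y + (z * x)) * (y + (z * x))) * x) := by rw [altl (y + (z * x)) x]
  have g19 : (y * (y * x)) = ((y * y) * x) := by rw [altl y x]
  have g20 : ((z * x) * ((z * x) * x)) = (((z * x) * (z * x)) * x) := by rw [altl (z * x) x]
  have g21 : ((z + (x * y)) * ((z + (x * y)) * x)) = (((z + (x * y)) * (z + (x * y))) * x) := by rw [altl (z + (x * y)) x]
  have g22 : ((x * y) * ((x * y) * x)) = (((x * y) * (x * y)) * x) := by rw [altl (x * y) x]
  have g23 : (z * ((y * x) * x)) = (z * (y * (x * x))) := by rw [altr x y]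
  have g24 : ((z * x) * x) = (z * (x * x)) := by rw [altr x z]
  have g25 : (y * ((z * x) * x)) = (y * (z * (x * x))) := by rw [altr x z]
  have g26 : (((y * z) * x) * x) = ((y * z) * (x * x)) := by rw [altr x (y * z)]
  have g27 : (((z * y) * x) * x) = ((z * y) * (x * x)) := by rw [altr x (z * y)]
  have g28 : (((z * (x + y)) * (x + y)) * x) = ((z * ((x + y) * (x + y))) * x) := by rw [altr (x + y) z]
  have g29 : (((z * x) * x) * x) = ((z * (x * x)) * x) := by rw [altr x z]
  have g30 : (((z * y) * y) * x) = ((z * (y * y)) * x) := by rw [altr y z]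
  have g31 : ((y * (x + z)) * (x + z)) = (y * ((x + z) * (x + z))) := by rw [altr (x + z) y]
  have g32 : ((y * x) * x) = (y * (x * x)) := by rw [altr x y]
  have g33 : ((y * z) * z) = (y * (z * z)) := by rw [altr z y]
  have g34 : (((y * (x + z)) * (x + z)) * x) = ((y * ((x + z) * (x + z))) * x) := by rw [altr (x + z) y]
  have g35 : (((y * x) * x) * x) = ((y * (x * x)) * x) := by rw [altr x y]
  have g36 : (((y * z) * z) * x) = ((y * (z * z)) * x) := by rw [altr z y]
  have g37 : ((z * (x + (y * x))) * (x + (y * x))) = (z * ((x + (y * x)) * (x + (y * x)))) := by rw [altr (x + (y * x)) z]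
  have g38 : ((z * (y * x)) * (y * x)) = (z * ((y * x) * (y * x))) := by rw [altr (y * x) z]
  linear_combination (norm := (simp only [circ, mul_add, add_mul, mul_sub, sub_mul]; abel1)) -g0 + g1 + g2 - g3 + g4 + g5 + g6 - g7 - g8 + g9 - g10 - g11 + g12 + g12 - g13 - g13 - g14 - g14 - g15 + g16 + g17 + g18 - g19 - g20 - g21 + g11 + g22 - g23 - g23 + g24 - g25 + g26 + g27 + g28 - g29 - g30 - g31 + g32 + g33 + g34 - g35 - g36 - g37 + g24 + g38

private lemma cmmouf2 {A : Type*} [NonUnitalNonAssocRing A]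
    (altl : ∀ x y : A, x * (x * y) = (x * x) * y)
    (altr : ∀ x y : A, (y * x) * x = y * (x * x)) (x y z : A) :
    circ (circ x y) (circ z x) = circ x (circ (circ y z) x) := by
  have g0 : ((x + y) * ((x + y) * x)) = (((x + y) * (x + y)) * x) := by rw [altl (x + y) x]
  have g1 : (x * (x * x)) = ((x * x) * x) := by rw [altl x x]
  have g2 : (y * (y * x)) = ((y * y) * x) := by rw [altl y x]
  have g3 : (z * ((x + y) * ((x + y) * x))) = (z * (((x + y) * (x + y)) * x)) := by rw [altl (x + y) x]
  have g4 : (z * (x * (x * x))) = (z * ((x * x) * x)) := by rw [altl x x]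
  have g5 : (z * (y * (y * x))) = (z * ((y * y) * x)) := by rw [altl y x]
  have g6 : ((x + y) * ((x + y) * z)) = (((x + y) * (x + y)) * z) := by rw [altl (x + y) z]
  have g7 : (x * (x * z)) = ((x * x) * z) := by rw [altl x z]
  have g8 : (y * (y * z)) = ((y * y) * z) := by rw [altl y z]
  have g9 : (((x + y) * ((x + y) * z)) * x) = ((((x + y) * (x + y)) * z) * x) := by rw [altl (x + y) z]
  have g10 : ((x * (x * z)) * x) = (((x * x) * z) * x) := by rw [altl x z]
  have g11 : ((y * (y * z)) * x) = (((y * y) * z) * x) := by rw [altl y z]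
  have g12 : (((y + z) * ((y + z) * x)) * x) = ((((y + z) * (y + z)) * x) * x) := by rw [altl (y + z) x]
  have g13 : ((y * (y * x)) * x) = (((y * y) * x) * x) := by rw [altl y x]
  have g14 : ((z * (z * x)) * x) = (((z * z) * x) * x) := by rw [altl z x]
  have g15 : ((y + z) * ((y + z) * (x * x))) = (((y + z) * (y + z)) * (x * x)) := by rw [altl (y + z) (x * x)]
  have g16 : (y * (y * (x * x))) = ((y * y) * (x * x)) := by rw [altl y (x * x)]
  have g17 : (z * (z * (x * x))) = ((z * z) * (x * x)) := by rw [altl z (x * x)]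
  have g18 : ((x + (y * z)) * ((x + (y * z)) * x)) = (((x + (y * z)) * (x + (y * z))) * x) := by rw [altl (x + (y * z)) x]
  have g19 : ((y * z) * ((y * z) * x)) = (((y * z) * (y * z)) * x) := by rw [altl (y * z) x]
  have g20 : ((y + (z * x)) * ((y + (z * x)) * x)) = (((y + (z * x)) * (y + (z * x))) * x) := by rw [altl (y + (z * x)) x]
  have g21 : ((z * x) * ((z * x) * x)) = (((z * x) * (z * x)) * x) := by rw [altl (z * x) x]
  have g22 : ((z + (x * y)) * ((z + (x * y)) * x)) = (((z + (x * y)) * (z + (x * y))) * x) := by rw [altl (z + (x * y)) x]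
  have g23 : (z * (z * x)) = ((z * z) * x) := by rw [altl z x]
  have g24 : ((x * y) * ((x * y) * x)) = (((x * y) * (x * y)) * x) := by rw [altl (x * y) x]
  have g25 : ((y * x) * x) = (y * (x * x)) := by rw [altr x y]
  have g26 : (z * ((y * x) * x)) = (z * (y * (x * x))) := by rw [altr x y]
  have g27 : (y * ((z * x) * x)) = (y * (z * (x * x))) := by rw [altr x z]
  have g28 : (((y * z) * x) * x) = ((y * z) * (x * x)) := by rw [altr x (y * z)]
  have g29 : (((z * y) * x) * x) = ((z * y) * (x * x)) := by rw [altr x (z * y)]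
  have g30 : (((z * (x + y)) * (x + y)) * x) = ((z * ((x + y) * (x + y))) * x) := by rw [altr (x + y) z]
  have g31 : (((z * x) * x) * x) = ((z * (x * x)) * x) := by rw [altr x z]
  have g32 : (((z * y) * y) * x) = ((z * (y * y)) * x) := by rw [altr y z]
  have g33 : ((y * (x + z)) * (x + z)) = (y * ((x + z) * (x + z))) := by rw [altr (x + z) y]
  have g34 : ((y * z) * z) = (y * (z * z)) := by rw [altr z y]
  have g35 : (((y * (x + z)) * (x + z)) * x) = ((y * ((x + z) * (x + z))) * x) := by rw [altr (x + z) y]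
  have g36 : (((y * x) * x) * x) = ((y * (x * x)) * x) := by rw [altr x y]
  have g37 : (((y * z) * z) * x) = ((y * (z * z)) * x) := by rw [altr z y]
  have g38 : ((z * (x + (y * x))) * (x + (y * x))) = (z * ((x + (y * x)) * (x + (y * x)))) := by rw [altr (x + (y * x)) z]
  have g39 : ((z * x) * x) = (z * (x * x)) := by rw [altr x z]
  have g40 : ((z * (y * x)) * (y * x)) = (z * ((y * x) * (y * x))) := by rw [altr (y * x) z]
  linear_combination (norm := (simp only [circ, mul_add, add_mul, mul_sub, sub_mul]; abel1)) -g0 + g1 + g2 - g3 + g4 + g5 - g6 + g7 + g8 + g9 - g10 - g11 + g12 + g12 - g13 - g13 - g14 - g14 - g15 + g16 + g17 + g18 - g1 - g19 + g20 - g2 - g21 - g22 + g23 + g24 - g25 - g26 - g26 - g27 + g28 + g28 + g29 + g30 - g31 - g32 - g33 + g25 + g34 + g35 - g36 - g37 - g38 + g39 + g40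

private lemma cC1 {A : Type*} [NonUnitalNonAssocRing A]
    (altl : ∀ x y : A, x * (x * y) = (x * x) * y)
    (altr : ∀ x y : A, (y * x) * x = y * (x * x)) (x y : A) :
    circ x (circ x y) = circ (circ x x) y := by
  have g0 : (x * (x * y)) = ((x * x) * y) := by rw [altl x y]
  linear_combination (norm := (simp only [circ, mul_add, add_mul, mul_sub, sub_mul]; abel1)) g0

private lemma cC2 {A : Type*} [NonUnitalNonAssocRing A]
    (altl : ∀ x y : A, x * (x * y) = (x * x) * y)
    (altr : ∀ x y : A, (y * x) * x = y * (x * x)) (x y : A) :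
    circ (circ y x) x = circ y (circ x x) := by
  have g0 : ((y * x) * x) = (y * (x * x)) := by rw [altr x y]
  linear_combination (norm := (simp only [circ, mul_add, add_mul, mul_sub, sub_mul]; abel1)) g0

private lemma cswap {A : Type*} [NonUnitalNonAssocRing A]
    (altl : ∀ x y : A, x * (x * y) = (x * x) * y)
    (altr : ∀ x y : A, (y * x) * x = y * (x * x)) (x y a : A) :
    circ (circ x y) a + circ (circ y x) a = circ x (circ y a) + circ y (circ x a) := by
  have g0 : ((x + y) * ((x + y) * a)) = (((x + y) * (x + y)) * a) := by rw [altl (x + y) a]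
  have g1 : (x * (x * a)) = ((x * x) * a) := by rw [altl x a]
  have g2 : (y * (y * a)) = ((y * y) * a) := by rw [altl y a]
  linear_combination (norm := (simp only [circ, mul_add, add_mul, mul_sub, sub_mul]; abel1)) -g0 + g1 + g2

private lemma cswapr {A : Type*} [NonUnitalNonAssocRing A]
    (altl : ∀ x y : A, x * (x * y) = (x * x) * y)
    (altr : ∀ x y : A, (y * x) * x = y * (x * x)) (x y a : A) :
    circ a (circ x y) + circ a (circ y x) = circ (circ a x) y + circ (circ a y) x := by
  have g0 : ((a * (x + y)) * (x + y)) = (a * ((x + y) * (x + y))) := by rw [altr (x + y) a]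
  have g1 : ((a * x) * x) = (a * (x * x)) := by rw [altr x a]
  have g2 : ((a * y) * y) = (a * (y * y)) := by rw [altr y a]
  linear_combination (norm := (simp only [circ, mul_add, add_mul, mul_sub, sub_mul]; abel1)) -g0 + g1 + g2
private lemma czero1 {A : Type*} [NonUnitalNonAssocRing A] (x : A) : circ 0 x = x := by
  simp [circ]

private lemma czero2 {A : Type*} [NonUnitalNonAssocRing A] (x : A) : circ x 0 = x := by
  simp [circ]

private lemma qi_iff {A : Type*} [NonUnitalNonAssocRing A] (a b : A) :
    IsQuasiinv a b ↔ (circ a b = 0 ∧ circ b a = 0) := by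
  unfold IsQuasiinv circ
  constructor
  · rintro ⟨h1, h2⟩
    exact ⟨h1, by rw [add_comm b a]; exact h2⟩
  · rintro ⟨h1, h2⟩
    exact ⟨h1, by rw [add_comm a b]; exact h2⟩

private lemma clip {A : Type*} [NonUnitalNonAssocRing A]
    (altl : ∀ x y : A, x * (x * y) = (x * x) * y)
    (altr : ∀ x y : A, (y * x) * x = y * (x * x)) {x w : A}
    (h1 : circ x w = 0) (h2 : circ w x = 0) (a : A) : circ x (circ w a) = a := by
  have hsum := cswap altl altr x w a
  rw [h1, h2, czero1] at hsum
  -- hsum : a + a = circ x (circ w a) + circ w (circ x a)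
  have ht := cmouf altl altr x w a
  rw [h1, czero1] at ht
  -- ht : circ x a = circ x (circ w (circ x a))
  have hs := cmouf altl altr w x a
  rw [h2, czero1] at hs
  -- hs : circ w a = circ w (circ x (circ w a))
  have h3 := congrArg (fun t => w * t) hsum
  have hwat : circ w a = circ w (circ w (circ x a)) := by
    linear_combination (norm := (simp only [circ, mul_add, add_mul, mul_sub, sub_mul]; abel1))
      hsum - hs - h3
  calc circ x (circ w a)
      = circ x (circ w (circ w (circ x a))) := by rw [← hwat]
    _ = circ x (circ (circ w w) (circ x a)) := by rw [cC1 altl altr w (circ x a)]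
    _ = circ (circ (circ x (circ w w)) x) a := (cmouf altl altr x (circ w w) a).symm
    _ = a := by rw [← cC2 altl altr w x, h1, czero1, h2, czero1]

private lemma crip {A : Type*} [NonUnitalNonAssocRing A]
    (altl : ∀ x y : A, x * (x * y) = (x * x) * y)
    (altr : ∀ x y : A, (y * x) * x = y * (x * x)) {x w : A}
    (h1 : circ x w = 0) (h2 : circ w x = 0) (a : A) : circ (circ a w) x = a := by
  have hsum := cswapr altl altr x w a
  rw [h1, h2, czero2] at hsum
  -- hsum : a + a = circ (circ a x) w + circ (circ a w) x
  have ht := cmoufr altl altr x w a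
  rw [h1, czero1] at ht
  have hs := cmoufr altl altr w x a
  rw [h2, czero1] at hs
  -- hs : circ (circ (circ a w) x) w = circ a w
  have h3 := congrArg (fun t => t * w) hsum
  have hwat : circ a w = circ (circ (circ a x) w) w := by
    linear_combination (norm := (simp only [circ, mul_add, add_mul, mul_sub, sub_mul]; abel1))
      hsum + hs - h3
  calc circ (circ a w) x
      = circ (circ (circ (circ a x) w) w) x := by rw [← hwat]
    _ = circ (circ (circ a x) (circ w w)) x := by rw [cC2 altl altr w (circ a x)]
    _ = circ a (circ (circ x (circ w w)) x) := cmoufr altl altr x (circ w w) a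
    _ = a := by rw [← cC2 altl altr w x, h1, czero1, h2, czero2]

private lemma cinv_closure {A : Type*} [NonUnitalNonAssocRing A]
    (altl : ∀ x y : A, x * (x * y) = (x * x) * y)
    (altr : ∀ x y : A, (y * x) * x = y * (x * x)) {x y x' y' : A}
    (hx1 : circ x x' = 0) (hx2 : circ x' x = 0)
    (hy1 : circ y y' = 0) (hy2 : circ y' y = 0) :
    circ (circ x y) (circ y' x') = 0 ∧ circ (circ y' x') (circ x y) = 0 := by
  constructor
  · have e1 : circ x' (circ x (circ x y)) = circ x y := clip altl altr hx2 hx1 (circ x y)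
    calc circ (circ x y) (circ y' x')
        = circ (circ x' (circ x (circ x y))) (circ y' x') := by rw [e1]
      _ = circ (circ x' (circ (circ x (circ x y)) y')) x' :=
          cmmouf altl altr x' (circ x (circ x y)) y'
      _ = circ (circ x' (circ (circ (circ x x) y) y')) x' := by rw [cC1 altl altr x y]
      _ = circ (circ x' (circ x x)) x' := by rw [crip altl altr hy2 hy1 (circ x x)]
      _ = circ x x' := by rw [clip altl altr hx2 hx1 x]
      _ = 0 := hx1
  · have e1 : circ (circ (circ x y) y) y' = circ x y := crip altl altr hy2 hy1 (circ x y)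
    calc circ (circ y' x') (circ x y)
        = circ (circ y' x') (circ (circ (circ x y) y) y') := by rw [e1]
      _ = circ y' (circ (circ x' (circ (circ x y) y)) y') :=
          cmmouf2 altl altr y' x' (circ (circ x y) y)
      _ = circ y' (circ (circ x' (circ x (circ y y))) y') := by rw [cC2 altl altr y x]
      _ = circ y' (circ (circ y y) y') := by rw [clip altl altr hx2 hx1 (circ y y)]
      _ = circ y' y := by rw [crip altl altr hy2 hy1 y]
      _ = 0 := hy2

/-- **Proposition 1.4.** In any alternative ring the circle operation
satisfies the Moufang identity `((x ∘ y) ∘ x) ∘ z = x ∘ (y ∘ (x ∘ z))` for all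
`x, y, z ∈ A`.  Consequently the set `J(A)` of quasiregular elements of `A` is a
Moufang loop under the circle operation, with identity element `0`. -/
theorem circ_moufang {A : Type*} [NonUnitalNonAssocRing A]
    (altl : ∀ x y : A, x * (x * y) = (x * x) * y)
    (altr : ∀ x y : A, (y * x) * x = y * (x * x)) :
    (∀ x y z : A, circ (circ (circ x y) x) z = circ x (circ y (circ x z))) ∧
      (∀ x y : A, IsQuasireg x → IsQuasireg y → IsQuasireg (circ x y)) ∧
      (IsQuasireg (0 : A) ∧ ∀ x : A, circ 0 x = x ∧ circ x 0 = x) ∧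
      (∀ a b : A, IsQuasireg a → IsQuasireg b →
        (∃! x : A, IsQuasireg x ∧ circ a x = b) ∧
        (∃! y : A, IsQuasireg y ∧ circ y a = b)) := by
  refine ⟨cmouf altl altr, ?_, ⟨⟨0, by simp [IsQuasiinv]⟩, fun x => ⟨czero1 x, czero2 x⟩⟩, ?_⟩
  · rintro x y ⟨x', hx⟩ ⟨y', hy⟩
    obtain ⟨hx1, hx2⟩ := (qi_iff x x').mp hx
    obtain ⟨hy1, hy2⟩ := (qi_iff y y').mp hy
    obtain ⟨c1, c2⟩ := cinv_closure altl altr hx1 hx2 hy1 hy2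
    exact ⟨circ y' x', (qi_iff _ _).mpr ⟨c1, c2⟩⟩
  · rintro a b ⟨a', ha⟩ ⟨b', hb⟩
    obtain ⟨ha1, ha2⟩ := (qi_iff a a').mp ha
    obtain ⟨hb1, hb2⟩ := (qi_iff b b').mp hb
    constructor
    · refine ⟨circ a' b, ⟨?_, clip altl altr ha1 ha2 b⟩, ?_⟩
      · obtain ⟨c1, c2⟩ := cinv_closure altl altr ha2 ha1 hb1 hb2
        exact ⟨circ b' a, (qi_iff _ _).mpr ⟨c1, c2⟩⟩
      · rintro y ⟨-, hy⟩
        calc y = circ a' (circ a y) := (clip altl altr ha2 ha1 y).symm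
          _ = circ a' b := by rw [hy]
    · refine ⟨circ b a', ⟨?_, crip altl altr ha1 ha2 b⟩, ?_⟩
      · obtain ⟨c1, c2⟩ := cinv_closure altl altr hb1 hb2 ha2 ha1
        exact ⟨circ a b', (qi_iff _ _).mpr ⟨c1, c2⟩⟩
      · rintro y ⟨-, hy⟩
        calc y = circ (circ y a) a' := (crip altl altr ha2 ha1 y).symm
          _ = circ b a' := by rw [hy]
end

section
/- Let A be an alternative ring and R a two-sided ideal of A. Let x, y ∈ A be quasiregular with quasiinverses a, b respectively, and let u ∈ R be quasiregular. Then (x ∘ u) ∘ a ∈ R and ((u ∘ x) ∘ y) ∘ (b ∘ a) ∈ R. (These are the membership computations showing that the circle loop U*(R) of quasiregular elements of R is a normal subloop of the circle loop U*(A).) -/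
namespace AltAux
variable {B : Type*} [NonAssocRing B]

/-- The associator. -/
def asc (x y z : B) : B := x*y*z - x*(y*z)

/-- The Teichmüller identity, valid in any nonassociative ring. -/
theorem teich (w x y z : B) :
    asc (w*x) y z - asc w (x*y) z + asc w x (y*z) = w * asc x y z + asc w x y * z := by
  simp only [asc, mul_sub, sub_mul]
  abel

set_option linter.unusedSectionVars false

variable (hl : ∀ x y : B, x * (x * y) = (x * x) * y) (hr : ∀ x y : B, (y * x) * x = y * (x * x))
include hl hr

theorem asc_lt (x y : B) : asc x x y = 0 := by simp [asc, hl]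
theorem asc_rt (x y : B) : asc x y y = 0 := by simp [asc, hr]

theorem swap12 (x y z : B) : asc y x z = - asc x y z := by
  have h := hl (x+y) z
  have hx := hl x z
  have hy := hl y z
  simp only [add_mul, mul_add] at h
  simp only [asc]
  linear_combination (norm := abel1) hx + hy - h

theorem swap23 (x y z : B) : asc x z y = - asc x y z := by
  have h := hr (y+z) x
  have hy := hr y x
  have hz := hr z x
  simp only [add_mul, mul_add] at h
  simp only [asc]
  linear_combination (norm := abel1) h - hy - hz

theorem asc_flex (x y : B) : asc x y x = 0 := by
  rw [swap12 hl hr, asc_rt hl hr, neg_zero]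

theorem cyc (x y z : B) : asc x y z = asc z x y := by
  rw [swap12 hl hr x z y, swap23 hl hr x y z, neg_neg]

theorem keyK (x y z : B) : asc (y*x) x z = -(x * asc x y z) := by
  have t1 := teich x x y z
  have t2 := teich x x z y
  have t3 := teich x y x z
  rw [asc_lt hl hr, asc_lt hl hr, zero_mul, add_zero, add_zero,
      swap12 hl hr (x*y) x z] at t1
  rw [asc_lt hl hr, asc_lt hl hr, zero_mul, add_zero, add_zero,
      swap23 hl hr (x*x) y z, swap23 hl hr x y (x*z), swap23 hl hr x y z, mul_neg] at t2
  rw [asc_flex hl hr, zero_mul, add_zero, swap12 hl hr (y*x) x z,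
      swap12 hl hr x y z, mul_neg] at t3
  linear_combination (norm := abel1) t3 - t1 - t2

/-- The left Moufang identity. -/
theorem lMouf (x y z : B) : x * (y * (x * z)) = ((x*y)*x)*z := by
  have t3 := teich x y x z
  have hk := keyK hl hr x y z
  rw [asc_flex hl hr, zero_mul, add_zero, swap12 hl hr (y*x) x z,
      swap12 hl hr x y z, mul_neg] at t3
  have h0 : asc (x*y) x z + asc x y (x*z) = 0 := by
    linear_combination (norm := abel1) t3 - hk
  simp only [asc] at h0
  linear_combination (norm := abel1) -h0

/-- The left inverse property. -/
theorem linv {a a' : B} (h1 : a * a' = 1) (h2 : a' * a = 1) (z : B) :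
    a * (a' * z) = z := by
  have sA1 : a * (a' * a') = a' := by rw [← hr a' a, h1, one_mul]
  have sA2 : ∀ w, a * (a' * (a' * (a * w))) = w := by
    intro w
    rw [hl a' (a*w), lMouf hl hr a (a'*a') w, sA1, h2, one_mul]
  have sA3 : ∀ w, a * (a' * w) + a' * (a * w) = w + w := by
    intro w
    have s := swap12 hl hr a a' w
    simp only [asc, h1, h2, one_mul] at s
    linear_combination (norm := abel1) -s
  have sA4 : ∀ w, a' * (a * (a' * w)) = a' * w := by
    intro w
    rw [lMouf hl hr a' a w, h2, one_mul]
  have h6 : a * (a' * (a * (a' * z))) = a * (a' * z) + a * (a' * z) - z := by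
    have h := sA2 z
    rw [show a' * (a * z) = z + z - a * (a' * z) by
          linear_combination (norm := abel1) sA3 z] at h
    simp only [mul_add, mul_sub] at h
    linear_combination (norm := abel1) -h
  have e1 : a' * (a * (a' * z) - z) = 0 := by
    rw [mul_sub, sA4 z, sub_self]
  have e2 : a * (a' * (a * (a' * z) - z)) = a * (a' * z) - z := by
    rw [mul_sub, mul_sub, h6]
    abel
  rw [e1, mul_zero] at e2
  linear_combination (norm := abel1) -e2

theorem asc_inv {a a' : B} (h1 : a * a' = 1) (h2 : a' * a = 1) (z : B) :
    asc a a' z = 0 := by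
  simp only [asc, h1, one_mul, linv hl hr h1 h2 z, sub_self]

theorem asc_one_left (y z : B) : asc (1:B) y z = 0 := by simp [asc]

/-- Product of two invertible elements is invertible, with inverse the
reversed product of the inverses. -/
theorem prod_inv {P P' Q Q' : B} (hP : P*P' = 1) (hP' : P'*P = 1)
    (hQ : Q*Q' = 1) (hQ' : Q'*Q = 1) : (P*Q)*(Q'*P') = 1 := by
  have hPQQ' : asc P Q Q' = 0 := by
    rw [← cyc hl hr Q Q' P]; exact asc_inv hl hr hQ hQ' P
  have r1 : (P*Q)*Q' = P := by
    have := hPQQ'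
    simp only [asc, hQ, mul_one] at this
    linear_combination (norm := abel1) this
  have X0 : asc P' (P*Q) Q' = 0 := by
    have t := teich P' P Q Q'
    simp only [hP', hQ, asc_one_left hl hr, asc_inv hl hr hP' hP, hPQQ',
      mul_zero, zero_mul, add_zero, zero_add, zero_sub, neg_eq_zero] at t
    exact t
  have X : asc (P*Q) Q' P' = 0 := by rw [cyc hl hr]; exact X0
  simp only [asc] at X
  rw [r1, hP] at X
  linear_combination (norm := abel1) -X

end AltAux

/-- **from Proposition 1.7.**  Let `A` be an alternative ring and `R` a
two-sided ideal of `A`.  If `x, y ∈ A` are quasiregular with quasiinverses `a, b`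
respectively and `u ∈ R` is quasiregular, then `(x ∘ u) ∘ a ∈ R` and
`((u ∘ x) ∘ y) ∘ (b ∘ a) ∈ R`. -/
theorem normality_memberships {A : Type*} [NonUnitalNonAssocRing A]
    (altl : ∀ x y : A, x * (x * y) = (x * x) * y)
    (altr : ∀ x y : A, (y * x) * x = y * (x * x))
    (R : Set A) (hR0 : (0 : A) ∈ R)
    (hRadd : ∀ x ∈ R, ∀ y ∈ R, x + y ∈ R)
    (hRneg : ∀ x ∈ R, -x ∈ R)
    (hRmul : ∀ a : A, ∀ r ∈ R, a * r ∈ R ∧ r * a ∈ R)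
    (x y a b u : A) (hxa : IsQuasiinv x a) (hyb : IsQuasiinv y b)
    (huR : u ∈ R) (hu : IsQuasireg u) :
    circ (circ x u) a ∈ R ∧ circ (circ (circ u x) y) (circ b a) ∈ R := by
  -- ideal stability of `circ` under perturbation in each argument
  have hsubL : ∀ s t w : A, s - t ∈ R → circ s w - circ t w ∈ R := by
    intro s t w hst
    have hm := (hRmul w (s - t) hst).2
    have h := hRadd _ hst _ (hRneg _ hm)
    have e : circ s w - circ t w = (s - t) + -((s - t) * w) := by
      simp only [circ, sub_mul]; abel
    rw [e]; exact h
  have hsubR : ∀ w s t : A, s - t ∈ R → circ w s - circ w t ∈ R := by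
    intro w s t hst
    have hm := (hRmul w (s - t) hst).1
    have h := hRadd _ hst _ (hRneg _ hm)
    have e : circ w s - circ w t = (s - t) + -(w * (s - t)) := by
      simp only [circ, mul_sub]; abel
    rw [e]; exact h
  have hxa1 : circ x a = 0 := hxa.1
  have hxa2 : circ a x = 0 := by
    show a + x - a * x = 0
    rw [add_comm a x]; exact hxa.2
  have hyb1 : circ y b = 0 := hyb.1
  have hyb2 : circ b y = 0 := by
    show b + y - b * y = 0
    rw [add_comm b y]; exact hyb.2
  constructor
  · -- part 1
    have d1 : circ x u - x ∈ R := by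
      have h := hsubR x u 0 (by rwa [sub_zero])
      rw [show circ x 0 = x by simp [circ]] at h
      exact h
    have d2 := hsubL _ _ a d1
    rw [hxa1, sub_zero] at d2
    exact d2
  · -- part 2 : first establish `(x∘y)∘(b∘a) = 0` via the unitization
    have hl' : ∀ p q : Unitization ℤ A, p * (p * q) = (p * p) * q := by
      intro p q
      ext
      · simp only [Unitization.fst_mul]; ring
      · simp only [Unitization.snd_mul, Unitization.fst_mul, smul_add, mul_add, add_mul,
          mul_smul_comm, smul_mul_assoc, smul_smul, altl]
        rw [mul_comm q.fst p.fst]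
        abel
    have hr' : ∀ p q : Unitization ℤ A, (q * p) * p = q * (p * p) := by
      intro p q
      ext
      · simp only [Unitization.fst_mul]; ring
      · simp only [Unitization.snd_mul, Unitization.fst_mul, smul_add, mul_add, add_mul,
          mul_smul_comm, smul_mul_assoc, smul_smul, altr]
        rw [mul_comm q.fst p.fst]
        abel
    have cu : ∀ s t : A, ((1 : Unitization ℤ A) - ↑s) * (1 - (↑t : Unitization ℤ A))
        = 1 - (↑(circ s t) : Unitization ℤ A) := by
      intro s t
      simp only [circ, Unitization.inr_sub, Unitization.inr_add, Unitization.inr_mul,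
        mul_sub, sub_mul, one_mul, mul_one]
      abel
    have qi : ∀ s t : A, circ s t = 0 →
        ((1 : Unitization ℤ A) - ↑s) * (1 - (↑t : Unitization ℤ A)) = 1 := by
      intro s t h
      rw [cu s t, h, Unitization.inr_zero, sub_zero]
    have main := AltAux.prod_inv hl' hr' (qi x a hxa1) (qi a x hxa2) (qi y b hyb1) (qi b y hyb2)
    rw [cu x y, cu b a, cu (circ x y) (circ b a), sub_eq_self] at main
    have key : circ (circ x y) (circ b a) = 0 :=
      Unitization.inr_injective (R := ℤ) (main.trans (Unitization.inr_zero ℤ).symm)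
    have d1 : circ u x - x ∈ R := by
      have h := hsubL u 0 x (by rwa [sub_zero])
      rw [show circ 0 x = x by simp [circ]] at h
      exact h
    have d2 := hsubL _ _ y d1
    have d3 := hsubL _ _ (circ b a) d2
    rw [key, sub_zero] at d3
    exact d3
end

section
/- Let A be an alternative ring and R a two-sided ideal of A. Let x₁, x₂ ∈ A be quasiregular and let a be a quasiinverse of x₂. Then x₁ − x₂ ∈ R if and only if a ∘ x₁ ∈ R. (This identifies the cosets of the circle loop U*(A) modulo the normal subloop U*(R).) -/
section AltLemmas

variable {B : Type*} [NonUnitalNonAssocRing B]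

theorem lin_left (altl : ∀ x y : B, x * (x * y) = (x * x) * y) (x y z : B) :
    x * (y * z) + y * (x * z) = (x * y) * z + (y * x) * z := by
  have h : x * (y * z) + y * (x * z) - ((x * y) * z + (y * x) * z)
      = ((x + y) * ((x + y) * z) - ((x + y) * (x + y)) * z)
        - (x * (x * z) - (x * x) * z) - (y * (y * z) - (y * y) * z) := by
    simp only [add_mul, mul_add]; abel
  rw [altl (x + y) z, altl x z, altl y z] at h
  simp only [sub_self, sub_zero, zero_sub, neg_zero] at h
  exact sub_eq_zero.mp h

theorem lin_right (altr : ∀ x y : B, (y * x) * x = y * (x * x)) (n a b : B) :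
    (n * a) * b + (n * b) * a = n * (a * b) + n * (b * a) := by
  have h : (n * a) * b + (n * b) * a - (n * (a * b) + n * (b * a))
      = ((n * (a + b)) * (a + b) - n * ((a + b) * (a + b)))
        - ((n * a) * a - n * (a * a)) - ((n * b) * b - n * (b * b)) := by
    simp only [add_mul, mul_add]; abel
  rw [altr (a + b) n, altr a n, altr b n] at h
  simp only [sub_self, sub_zero, zero_sub, neg_zero] at h
  exact sub_eq_zero.mp h

theorem left_moufang (altl : ∀ x y : B, x * (x * y) = (x * x) * y)
    (altr : ∀ x y : B, (y * x) * x = y * (x * x)) (x y z : B) : (((x * y) * x) * z) = (x * (y * (x * z))) := by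
  have h0 : (((y * z) * x) * x) - (((y * z) * (x * x))) = 0 := sub_eq_zero_of_eq (altr x (y * z))
  have h1 : (x * (x * (z * y))) - (((x * x) * (z * y))) = 0 := sub_eq_zero_of_eq (altl x (z * y))
  have h2 : ((z * (x * x)) * y) + ((z * y) * (x * x)) - ((z * ((x * x) * y)) + (z * (y * (x * x)))) = 0 := sub_eq_zero_of_eq (lin_right altr z (x * x) y)
  have h3 : ((y * (x * x)) * z) + ((y * z) * (x * x)) - ((y * ((x * x) * z)) + (y * (z * (x * x)))) = 0 := sub_eq_zero_of_eq (lin_right altr y (x * x) z)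
  have h4 : ((x * y) * (x * z)) + (x * ((x * y) * z)) - ((((x * y) * x) * z) + ((x * (x * y)) * z)) = 0 := sub_eq_zero_of_eq (lin_left altl (x * y) x z)
  have h5 : ((x * (x * y)) * z) + ((x * z) * (x * y)) - ((x * ((x * y) * z)) + (x * (z * (x * y)))) = 0 := sub_eq_zero_of_eq (lin_right altr x (x * y) z)
  have h6 : ((y * x) * (x * z)) + (x * ((y * x) * z)) - ((((y * x) * x) * z) + ((x * (y * x)) * z)) = 0 := sub_eq_zero_of_eq (lin_left altl (y * x) x z)
  have h7 : ((z * (y * x)) * x) + ((z * x) * (y * x)) - ((z * ((y * x) * x)) + (z * (x * (y * x)))) = 0 := sub_eq_zero_of_eq (lin_right altr z (y * x) x)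
  have h8 : ((x * (y * x)) * z) + ((x * z) * (y * x)) - ((x * ((y * x) * z)) + (x * (z * (y * x)))) = 0 := sub_eq_zero_of_eq (lin_right altr x (y * x) z)
  have h9 : ((z * x) * (x * y)) + (x * ((z * x) * y)) - ((((z * x) * x) * y) + ((x * (z * x)) * y)) = 0 := sub_eq_zero_of_eq (lin_left altl (z * x) x y)
  have h10 : ((y * (z * x)) * x) + ((y * x) * (z * x)) - ((y * ((z * x) * x)) + (y * (x * (z * x)))) = 0 := sub_eq_zero_of_eq (lin_right altr y (z * x) x)
  have h11 : ((x * (z * x)) * y) + ((x * y) * (z * x)) - ((x * ((z * x) * y)) + (x * (y * (z * x)))) = 0 := sub_eq_zero_of_eq (lin_right altr x (z * x) y)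
  have h12 : ((z * y) * (x * x)) + (x * ((z * y) * x)) - ((((z * y) * x) * x) + ((x * (z * y)) * x)) = 0 := sub_eq_zero_of_eq (lin_left altl (z * y) x x)
  have h13 : ((x * (z * y)) * x) + ((x * x) * (z * y)) - ((x * ((z * y) * x)) + (x * (x * (z * y)))) = 0 := sub_eq_zero_of_eq (lin_right altr x (z * y) x)
  have h14 : (x * (y * (x * z))) + (y * (x * (x * z))) - (((x * y) * (x * z)) + ((y * x) * (x * z))) = 0 := sub_eq_zero_of_eq (lin_left altl x y (x * z))
  have h15 : (x * (y * (z * x))) + (y * (x * (z * x))) - (((x * y) * (z * x)) + ((y * x) * (z * x))) = 0 := sub_eq_zero_of_eq (lin_left altl x y (z * x))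
  have h16 : (x * (z * (x * y))) + (z * (x * (x * y))) - (((x * z) * (x * y)) + ((z * x) * (x * y))) = 0 := sub_eq_zero_of_eq (lin_left altl x z (x * y))
  have h17 : (x * (z * (y * x))) + (z * (x * (y * x))) - (((x * z) * (y * x)) + ((z * x) * (y * x))) = 0 := sub_eq_zero_of_eq (lin_left altl x z (y * x))
  have h18 : (y * (z * (x * x))) + (z * (y * (x * x))) - (((y * z) * (x * x)) + ((z * y) * (x * x))) = 0 := sub_eq_zero_of_eq (lin_left altl y z (x * x))
  have h19 : (z * (x * (x * y))) - ((z * ((x * x) * y))) = 0 := sub_eq_zero_of_eq (congrArg (fun w => z * w) ((altl x y)))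
  have h20 : (z * ((y * x) * x)) - ((z * (y * (x * x)))) = 0 := sub_eq_zero_of_eq (congrArg (fun w => z * w) ((altr x y)))
  have h21 : (((y * x) * x) * z) - (((y * (x * x)) * z)) = 0 := sub_eq_zero_of_eq (congrArg (fun w => w * z) ((altr x y)))
  have h22 : (y * (x * (x * z))) - ((y * ((x * x) * z))) = 0 := sub_eq_zero_of_eq (congrArg (fun w => y * w) ((altl x z)))
  have h23 : (y * ((z * x) * x)) - ((y * (z * (x * x)))) = 0 := sub_eq_zero_of_eq (congrArg (fun w => y * w) ((altr x z)))
  have h24 : (((z * x) * x) * y) - (((z * (x * x)) * y)) = 0 := sub_eq_zero_of_eq (congrArg (fun w => w * y) ((altr x z)))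
  have h25 : ((y * (z * x)) * x) + ((z * (y * x)) * x) - ((((y * z) * x) * x) + (((z * y) * x) * x)) = 0 := sub_eq_zero_of_eq (by simpa only [add_mul] using congrArg (fun w => w * x) ((lin_left altl y z x)))
  have key : (((x * y) * x) * z) - (x * (y * (x * z))) = ((((y * z) * x) * x) - (((y * z) * (x * x)))) - ((x * (x * (z * y))) - (((x * x) * (z * y)))) - (((z * (x * x)) * y) + ((z * y) * (x * x)) - ((z * ((x * x) * y)) + (z * (y * (x * x))))) - (((y * (x * x)) * z) + ((y * z) * (x * x)) - ((y * ((x * x) * z)) + (y * (z * (x * x))))) - (((x * y) * (x * z)) + (x * ((x * y) * z)) - ((((x * y) * x) * z) + ((x * (x * y)) * z))) - (((x * (x * y)) * z) + ((x * z) * (x * y)) - ((x * ((x * y) * z)) + (x * (z * (x * y))))) - (((y * x) * (x * z)) + (x * ((y * x) * z)) - ((((y * x) * x) * z) + ((x * (y * x)) * z))) - (((z * (y * x)) * x) + ((z * x) * (y * x)) - ((z * ((y * x) * x)) + (z * (x * (y * x))))) - (((x * (y * x)) * z) + ((x * z) * (y * x)) - ((x * ((y * x) * z)) + (x * (z * (y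 * x))))) - (((z * x) * (x * y)) + (x * ((z * x) * y)) - ((((z * x) * x) * y) + ((x * (z * x)) * y))) - (((y * (z * x)) * x) + ((y * x) * (z * x)) - ((y * ((z * x) * x)) + (y * (x * (z * x))))) - (((x * (z * x)) * y) + ((x * y) * (z * x)) - ((x * ((z * x) * y)) + (x * (y * (z * x))))) - (((z * y) * (x * x)) + (x * ((z * y) * x)) - ((((z * y) * x) * x) + ((x * (z * y)) * x))) - (((x * (z * y)) * x) + ((x * x) * (z * y)) - ((x * ((z * y) * x)) + (x * (x * (z * y))))) - ((x * (y * (x * z))) + (y * (x * (x * z))) - (((x * y) * (x * z)) + ((y * x) * (x * z)))) - ((x * (y * (z * x))) + (y * (x * (z * x))) - (((x * y) * (z * x)) + ((y * x) * (z * x)))) - ((x * (z * (x * y))) + (z * (x * (x * y))) - (((x * z) * (x * y)) + ((z * x) * (x * y)))) - ((x * (z * (y * x))) + (z * (x * (y * x))) - (((x * z) * (y * x)) + ((z * x) * (y * x)))) - ((y * (z * (x * x))) + (z * (y * (x * x))) - (((y * z) * (x * x)) + ((z * y) * (x * x)))) - ((y * (z * (x * x))) + (z * (y * (x * x))) - (((y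 * z) * (x * x)) + ((z * y) * (x * x)))) + ((z * (x * (x * y))) - ((z * ((x * x) * y)))) - ((z * ((y * x) * x)) - ((z * (y * (x * x))))) - ((((y * x) * x) * z) - (((y * (x * x)) * z))) + ((y * (x * (x * z))) - ((y * ((x * x) * z)))) - ((y * ((z * x) * x)) - ((y * (z * (x * x))))) - ((((z * x) * x) * y) - (((z * (x * x)) * y))) + (((y * (z * x)) * x) + ((z * (y * x)) * x) - ((((y * z) * x) * x) + (((z * y) * x) * x))) := by abel
  simp only [h0, h1, h2, h3, h4, h5, h6, h7, h8, h9, h10, h11, h12, h13, h14, h15, h16, h17, h18, h19, h20, h21, h22, h23, h24, h25, add_zero, zero_add, sub_zero, zero_sub, neg_zero, add_neg_cancel, neg_neg] at key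
  exact sub_eq_zero.mp key

theorem middle_moufang (altl : ∀ x y : B, x * (x * y) = (x * x) * y)
    (altr : ∀ x y : B, (y * x) * x = y * (x * x)) (x y z : B) : ((x * y) * (z * x)) = (x * ((y * z) * x)) := by
  have h0 : (((y * z) * x) * x) - (((y * z) * (x * x))) = 0 := sub_eq_zero_of_eq (altr x (y * z))
  have h1 : (x * (x * (z * y))) - (((x * x) * (z * y))) = 0 := sub_eq_zero_of_eq (altl x (z * y))
  have h2 : ((z * (x * x)) * y) + ((z * y) * (x * x)) - ((z * ((x * x) * y)) + (z * (y * (x * x)))) = 0 := sub_eq_zero_of_eq (lin_right altr z (x * x) y)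
  have h3 : ((y * (x * x)) * z) + ((y * z) * (x * x)) - ((y * ((x * x) * z)) + (y * (z * (x * x)))) = 0 := sub_eq_zero_of_eq (lin_right altr y (x * x) z)
  have h4 : ((z * (x * y)) * x) + ((z * x) * (x * y)) - ((z * ((x * y) * x)) + (z * (x * (x * y)))) = 0 := sub_eq_zero_of_eq (lin_right altr z (x * y) x)
  have h5 : ((x * y) * (z * x)) + (z * ((x * y) * x)) - ((((x * y) * z) * x) + ((z * (x * y)) * x)) = 0 := sub_eq_zero_of_eq (lin_left altl (x * y) z x)
  have h6 : ((y * (x * z)) * x) + ((y * x) * (x * z)) - ((y * ((x * z) * x)) + (y * (x * (x * z)))) = 0 := sub_eq_zero_of_eq (lin_right altr y (x * z) x)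
  have h7 : ((y * x) * (x * z)) + (x * ((y * x) * z)) - ((((y * x) * x) * z) + ((x * (y * x)) * z)) = 0 := sub_eq_zero_of_eq (lin_left altl (y * x) x z)
  have h8 : ((z * (y * x)) * x) + ((z * x) * (y * x)) - ((z * ((y * x) * x)) + (z * (x * (y * x)))) = 0 := sub_eq_zero_of_eq (lin_right altr z (y * x) x)
  have h9 : ((y * x) * (z * x)) + (z * ((y * x) * x)) - ((((y * x) * z) * x) + ((z * (y * x)) * x)) = 0 := sub_eq_zero_of_eq (lin_left altl (y * x) z x)
  have h10 : ((x * (y * x)) * z) + ((x * z) * (y * x)) - ((x * ((y * x) * z)) + (x * (z * (y * x)))) = 0 := sub_eq_zero_of_eq (lin_right altr x (y * x) z)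
  have h11 : ((y * z) * (x * x)) + (x * ((y * z) * x)) - ((((y * z) * x) * x) + ((x * (y * z)) * x)) = 0 := sub_eq_zero_of_eq (lin_left altl (y * z) x x)
  have h12 : ((z * x) * (x * y)) + (x * ((z * x) * y)) - ((((z * x) * x) * y) + ((x * (z * x)) * y)) = 0 := sub_eq_zero_of_eq (lin_left altl (z * x) x y)
  have h13 : ((y * (z * x)) * x) + ((y * x) * (z * x)) - ((y * ((z * x) * x)) + (y * (x * (z * x)))) = 0 := sub_eq_zero_of_eq (lin_right altr y (z * x) x)
  have h14 : ((x * (z * x)) * y) + ((x * y) * (z * x)) - ((x * ((z * x) * y)) + (x * (y * (z * x)))) = 0 := sub_eq_zero_of_eq (lin_right altr x (z * x) y)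
  have h15 : ((z * y) * (x * x)) + (x * ((z * y) * x)) - ((((z * y) * x) * x) + ((x * (z * y)) * x)) = 0 := sub_eq_zero_of_eq (lin_left altl (z * y) x x)
  have h16 : ((x * (z * y)) * x) + ((x * x) * (z * y)) - ((x * ((z * y) * x)) + (x * (x * (z * y)))) = 0 := sub_eq_zero_of_eq (lin_right altr x (z * y) x)
  have h17 : (x * (y * (z * x))) + (y * (x * (z * x))) - (((x * y) * (z * x)) + ((y * x) * (z * x))) = 0 := sub_eq_zero_of_eq (lin_left altl x y (z * x))
  have h18 : (x * (z * (y * x))) + (z * (x * (y * x))) - (((x * z) * (y * x)) + ((z * x) * (y * x))) = 0 := sub_eq_zero_of_eq (lin_left altl x z (y * x))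
  have h19 : (y * (z * (x * x))) + (z * (y * (x * x))) - (((y * z) * (x * x)) + ((z * y) * (x * x))) = 0 := sub_eq_zero_of_eq (lin_left altl y z (x * x))
  have h20 : (z * (x * (x * y))) - ((z * ((x * x) * y))) = 0 := sub_eq_zero_of_eq (congrArg (fun w => z * w) ((altl x y)))
  have h21 : (z * ((y * x) * x)) - ((z * (y * (x * x)))) = 0 := sub_eq_zero_of_eq (congrArg (fun w => z * w) ((altr x y)))
  have h22 : (((y * x) * x) * z) - (((y * (x * x)) * z)) = 0 := sub_eq_zero_of_eq (congrArg (fun w => w * z) ((altr x y)))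
  have h23 : (y * (x * (x * z))) - ((y * ((x * x) * z))) = 0 := sub_eq_zero_of_eq (congrArg (fun w => y * w) ((altl x z)))
  have h24 : (y * ((z * x) * x)) - ((y * (z * (x * x)))) = 0 := sub_eq_zero_of_eq (congrArg (fun w => y * w) ((altr x z)))
  have h25 : (((z * x) * x) * y) - (((z * (x * x)) * y)) = 0 := sub_eq_zero_of_eq (congrArg (fun w => w * y) ((altr x z)))
  have h26 : ((x * (y * z)) * x) + ((y * (x * z)) * x) - ((((x * y) * z) * x) + (((y * x) * z) * x)) = 0 := sub_eq_zero_of_eq (by simpa only [add_mul] using congrArg (fun w => w * x) ((lin_left altl x y z)))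
  have h27 : (y * (x * (z * x))) + (y * (z * (x * x))) - ((y * ((x * z) * x)) + (y * ((z * x) * x))) = 0 := sub_eq_zero_of_eq (by simpa only [mul_add] using congrArg (fun w => y * w) ((lin_left altl x z x)))
  have h28 : ((y * (z * x)) * x) + ((z * (y * x)) * x) - ((((y * z) * x) * x) + (((z * y) * x) * x)) = 0 := sub_eq_zero_of_eq (by simpa only [add_mul] using congrArg (fun w => w * x) ((lin_left altl y z x)))
  have key : ((x * y) * (z * x)) - (x * ((y * z) * x)) = ((((y * z) * x) * x) - (((y * z) * (x * x)))) - ((x * (x * (z * y))) - (((x * x) * (z * y)))) - ((x * (x * (z * y))) - (((x * x) * (z * y)))) - (((z * (x * x)) * y) + ((z * y) * (x * x)) - ((z * ((x * x) * y)) + (z * (y * (x * x))))) - (((y * (x * x)) * z) + ((y * z) * (x * x)) - ((y * ((x * x) * z)) + (y * (z * (x * x))))) + (((z * (x * y)) * x) + ((z * x) * (x * y)) - ((z * ((x * y) * x)) + (z * (x * (x * y))))) + (((x * y) * (z * x)) + (z * ((x * y) * x)) - ((((x * y) * z) * x) + ((z * (x * y)) * x))) + (((y * (x * z)) * x) + ((y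 * x) * (x * z)) - ((y * ((x * z) * x)) + (y * (x * (x * z))))) - (((y * x) * (x * z)) + (x * ((y * x) * z)) - ((((y * x) * x) * z) + ((x * (y * x)) * z))) - (((z * (y * x)) * x) + ((z * x) * (y * x)) - ((z * ((y * x) * x)) + (z * (x * (y * x))))) + (((y * x) * (z * x)) + (z * ((y * x) * x)) - ((((y * x) * z) * x) + ((z * (y * x)) * x))) - (((x * (y * x)) * z) + ((x * z) * (y * x)) - ((x * ((y * x) * z)) + (x * (z * (y * x))))) - (((y * z) * (x * x)) + (x * ((y * z) * x)) - ((((y * z) * x) * x) + ((x * (y * z)) * x))) - (((z * x) * (x * y)) + (x * ((z * x) * y)) - ((((z * x) * x) * y) + ((x * (z * x)) * y))) - (((y * (z * x)) * x) + ((y * x) * (z * x)) - ((y * ((z * x) * x)) + (y * (x * (z * x))))) - (((y * (z * x)) * x) + ((y * x) * (z * x)) - ((y * ((z * x) * x)) + (y * (x * (z * x))))) - (((x * (z * x)) * y) + ((x * y) * (z * x)) - ((x * ((z * x) * y)) + (x * (y * (z * x))))) - (((z * y) * (x * x)) + (x * ((z * y) * x)) - ((((z * y) * x) * x) + ((x *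 (z * y)) * x))) - (((z * y) * (x * x)) + (x * ((z * y) * x)) - ((((z * y) * x) * x) + ((x * (z * y)) * x))) - (((x * (z * y)) * x) + ((x * x) * (z * y)) - ((x * ((z * y) * x)) + (x * (x * (z * y))))) - (((x * (z * y)) * x) + ((x * x) * (z * y)) - ((x * ((z * y) * x)) + (x * (x * (z * y))))) - ((x * (y * (z * x))) + (y * (x * (z * x))) - (((x * y) * (z * x)) + ((y * x) * (z * x)))) - ((x * (z * (y * x))) + (z * (x * (y * x))) - (((x * z) * (y * x)) + ((z * x) * (y * x)))) - ((y * (z * (x * x))) + (z * (y * (x * x))) - (((y * z) * (x * x)) + ((z * y) * (x * x)))) - ((y * (z * (x * x))) + (z * (y * (x * x))) - (((y * z) * (x * x)) + ((z * y) * (x * x)))) - ((y * (z * (x * x))) + (z * (y * (x * x))) - (((y * z) * (x * x)) + ((z * y) * (x * x)))) + ((z * (x * (x * y))) - ((z * ((x * x) * y)))) - ((z * ((y * x) * x)) - ((z * (y * (x * x))))) - ((z * ((y * x) * x)) - ((z * (y * (x * x))))) - ((((y * x) * x) * z) - (((y * (x * x)) * z))) + ((y * (x * (x * z))) - ((y *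 ((x * x) * z)))) - ((y * ((z * x) * x)) - ((y * (z * (x * x))))) - ((y * ((z * x) * x)) - ((y * (z * (x * x))))) - ((y * ((z * x) * x)) - ((y * (z * (x * x))))) - ((((z * x) * x) * y) - (((z * (x * x)) * y))) - (((x * (y * z)) * x) + ((y * (x * z)) * x) - ((((x * y) * z) * x) + (((y * x) * z) * x))) - ((y * (x * (z * x))) + (y * (z * (x * x))) - ((y * ((x * z) * x)) + (y * ((z * x) * x)))) + (((y * (z * x)) * x) + ((z * (y * x)) * x) - ((((y * z) * x) * x) + (((z * y) * x) * x))) + (((y * (z * x)) * x) + ((z * (y * x)) * x) - ((((y * z) * x) * x) + (((z * y) * x) * x))) := by abel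
  simp only [h0, h1, h2, h3, h4, h5, h6, h7, h8, h9, h10, h11, h12, h13, h14, h15, h16, h17, h18, h19, h20, h21, h22, h23, h24, h25, h26, h27, h28, add_zero, zero_add, sub_zero, zero_sub, neg_zero, add_neg_cancel, neg_neg] at key
  exact sub_eq_zero.mp key

end AltLemmas

theorem core_lemma {B : Type*} [NonAssocRing B]
    (altl : ∀ x y : B, x * (x * y) = (x * x) * y)
    (altr : ∀ x y : B, (y * x) * x = y * (x * x))
    (S S' t : B) (h1 : S * S' = 1) (h2 : S' * S = 1) (h3 : S' * t = 1) : t = S := by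
  have e1 : S' * (t - S) = 0 := by rw [mul_sub, h2, h3, sub_self]
  have e2 : S' * (S * S) = S := by rw [← altr S S', h2, one_mul]
  have e3 : S' * (S * t) = t + t - S := by
    have h := lin_left altl S S' t
    rw [h3, h1, h2, mul_one, one_mul] at h
    exact eq_sub_of_add_eq' h
  have e4 : S' * (S * (t - S)) = (t - S) + (t - S) := by
    rw [mul_sub, mul_sub, e3, e2]; abel
  have e5 : S * (t - S) = 0 := by
    have h := left_moufang altl altr S S' (t - S)
    rw [h1, one_mul, e4, mul_add] at h
    exact (left_eq_add.mp h)
  have e6 : (t - S) * S = 0 := by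
    have h := middle_moufang altl altr S S' (t - S)
    rw [h1, one_mul, e1, zero_mul, mul_zero] at h
    exact h
  have e7 := lin_right altr S' S (t - S)
  rw [h2, one_mul, e1, zero_mul, e5, e6, mul_zero] at e7
  simp only [add_zero] at e7
  exact sub_eq_zero.mp e7

section Unitization

variable {A : Type*} [NonUnitalNonAssocRing A]

theorem altlU (altl : ∀ x y : A, x * (x * y) = (x * x) * y)
    (p q : Unitization ℤ A) : p * (p * q) = (p * p) * q := by
  refine Unitization.ext ?_ ?_
  · simp only [Unitization.fst_mul]; ring
  · simp only [Unitization.snd_mul, Unitization.fst_mul, smul_add, mul_add, add_mul,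
      smul_smul, mul_smul_comm, smul_mul_assoc, altl]
    module

theorem altrU (altr : ∀ x y : A, (y * x) * x = y * (x * x))
    (p q : Unitization ℤ A) : (q * p) * p = q * (p * p) := by
  refine Unitization.ext ?_ ?_
  · simp only [Unitization.fst_mul]; ring
  · simp only [Unitization.snd_mul, Unitization.fst_mul, smul_add, mul_add, add_mul,
      smul_smul, mul_smul_comm, smul_mul_assoc, altr]
    module

/-- The congruence on the unitization induced by a two-sided ideal `R ⊆ A`. -/
def idealCon (R : Set A) (hR0 : (0 : A) ∈ R)
    (hRadd : ∀ x ∈ R, ∀ y ∈ R, x + y ∈ R)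
    (hRneg : ∀ x ∈ R, -x ∈ R)
    (hRmul : ∀ a : A, ∀ r ∈ R, a * r ∈ R ∧ r * a ∈ R)
    (hRz : ∀ (n : ℤ), ∀ r ∈ R, n • r ∈ R) : RingCon (Unitization ℤ A) where
  r p q := p.fst = q.fst ∧ p.snd - q.snd ∈ R
  iseqv := by
    refine ⟨fun p => ⟨rfl, by simpa using hR0⟩, fun h => ⟨h.1.symm, ?_⟩,
      fun h h' => ⟨h.1.trans h'.1, ?_⟩⟩
    · have := hRneg _ h.2; rwa [neg_sub] at this
    · have := hRadd _ h.2 _ h'.2; rwa [sub_add_sub_cancel] at this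
  add' := by
    intro p q p' q' h h'
    refine ⟨?_, ?_⟩
    · simp only [Unitization.fst_add, h.1, h'.1]
    · have := hRadd _ h.2 _ h'.2
      rwa [show p.snd - q.snd + (p'.snd - q'.snd)
        = (p + p').snd - (q + q').snd by simp only [Unitization.snd_add]; abel] at this
  mul' := by
    intro p q p' q' h h'
    refine ⟨?_, ?_⟩
    · simp only [Unitization.fst_mul, h.1, h'.1]
    · have key : (p * p').snd - (q * q').snd
          = p.fst • (p'.snd - q'.snd) + q'.fst • (p.snd - q.snd)
            + (p.snd * (p'.snd - q'.snd) + (p.snd - q.snd) * q'.snd) := by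
        simp only [Unitization.snd_mul, smul_sub, mul_sub, sub_mul, h.1, h'.1]
        abel
      rw [key]
      exact hRadd _ (hRadd _ (hRz _ _ h'.2) _ (hRz _ _ h.2)) _
        (hRadd _ (hRmul _ _ h'.2).1 _ (hRmul _ _ h.2).2)

end Unitization

/-- **from Proposition 1.7.**  Let `A` be an alternative ring and `R` a
two-sided ideal of `A`.  If `x₁, x₂ ∈ A` are quasiregular and `a` is a quasiinverse of
`x₂`, then `x₁ - x₂ ∈ R` if and only if `a ∘ x₁ ∈ R`. -/
theorem coset_characterization {A : Type*} [NonUnitalNonAssocRing A]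
    (altl : ∀ x y : A, x * (x * y) = (x * x) * y)
    (altr : ∀ x y : A, (y * x) * x = y * (x * x))
    (R : Set A) (hR0 : (0 : A) ∈ R)
    (hRadd : ∀ x ∈ R, ∀ y ∈ R, x + y ∈ R)
    (hRneg : ∀ x ∈ R, -x ∈ R)
    (hRmul : ∀ a : A, ∀ r ∈ R, a * r ∈ R ∧ r * a ∈ R)
    (x₁ x₂ a : A) (hx₁ : IsQuasireg x₁) (hx₂ : IsQuasiinv x₂ a) :
    x₁ - x₂ ∈ R ↔ circ a x₁ ∈ R := by
  have key : circ a x₁ = (x₁ - x₂) - a * (x₁ - x₂) := by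
    show a + x₁ - a * x₁ = _
    rw [mul_sub, ← sub_eq_zero]
    calc a + x₁ - a * x₁ - (x₁ - x₂ - (a * x₁ - a * x₂)) = x₂ + a - a * x₂ := by abel
      _ = 0 := hx₂.2
  constructor
  · intro hd
    rw [key, sub_eq_add_neg]
    exact hRadd _ hd _ (hRneg _ (hRmul a _ hd).1)
  · intro hc
    -- zsmul closure
    have hRz : ∀ (n : ℤ), ∀ r ∈ R, n • r ∈ R := by
      intro n r hr
      induction n using Int.induction_on with
      | zero => simpa using hR0
      | succ k ih => rw [add_smul, one_smul]; exact hRadd _ ih _ hr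
      | pred k ih => rw [sub_smul, one_smul, sub_eq_add_neg]; exact hRadd _ ih _ (hRneg _ hr)
    set con := idealCon R hR0 hRadd hRneg hRmul hRz with hcon
    have hsurj : ∀ u : con.Quotient, ∃ p : Unitization ℤ A, (p : con.Quotient) = u :=
      fun u => Quot.inductionOn u (fun p => ⟨p, rfl⟩)
    have altlQ : ∀ u v : con.Quotient, u * (u * v) = (u * u) * v := by
      intro u v
      obtain ⟨p, rfl⟩ := hsurj u
      obtain ⟨q, rfl⟩ := hsurj v
      rw [← RingCon.coe_mul, ← RingCon.coe_mul, ← RingCon.coe_mul, ← RingCon.coe_mul,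
        altlU altl p q]
    have altrQ : ∀ u v : con.Quotient, (v * u) * u = v * (u * u) := by
      intro u v
      obtain ⟨p, rfl⟩ := hsurj u
      obtain ⟨q, rfl⟩ := hsurj v
      rw [← RingCon.coe_mul, ← RingCon.coe_mul, ← RingCon.coe_mul, ← RingCon.coe_mul,
        altrU altr p q]
    -- elements of the unitization
    have expand : ∀ X Y : Unitization ℤ A,
        (1 - X) * (1 - Y) = 1 - (X + Y - X * Y) := by
      intro X Y
      rw [sub_mul, one_mul, mul_sub, mul_one]; abel
    have u1 : (1 - (x₂ : Unitization ℤ A)) * (1 - (a : Unitization ℤ A)) = 1 := by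
      rw [expand, ← Unitization.inr_mul, ← Unitization.inr_add, ← Unitization.inr_sub,
        hx₂.1, Unitization.inr_zero, sub_zero]
    have u2 : (1 - (a : Unitization ℤ A)) * (1 - (x₂ : Unitization ℤ A)) = 1 := by
      have hA : a + x₂ - a * x₂ = 0 := by
        calc a + x₂ - a * x₂ = x₂ + a - a * x₂ := by abel
          _ = 0 := hx₂.2
      rw [expand, ← Unitization.inr_mul, ← Unitization.inr_add, ← Unitization.inr_sub,
        hA, Unitization.inr_zero, sub_zero]
    have u3 : (1 - (a : Unitization ℤ A)) * (1 - (x₁ : Unitization ℤ A))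
        = 1 - ((circ a x₁ : A) : Unitization ℤ A) := by
      rw [expand, ← Unitization.inr_mul, ← Unitization.inr_add, ← Unitization.inr_sub]
      rfl
    -- hypotheses of the core lemma in the quotient
    have hS1 : ((1 - (x₂ : Unitization ℤ A) : Unitization ℤ A) : con.Quotient)
        * ((1 - (a : Unitization ℤ A) : Unitization ℤ A) : con.Quotient) = 1 := by
      rw [← RingCon.coe_mul, u1, RingCon.coe_one]
    have hS2 : ((1 - (a : Unitization ℤ A) : Unitization ℤ A) : con.Quotient)
        * ((1 - (x₂ : Unitization ℤ A) : Unitization ℤ A) : con.Quotient) = 1 := by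
      rw [← RingCon.coe_mul, u2, RingCon.coe_one]
    have hcz : (((circ a x₁ : A) : Unitization ℤ A) : con.Quotient) = 0 := by
      rw [show (0 : con.Quotient) = ((0 : Unitization ℤ A) : con.Quotient) from rfl]
      rw [RingCon.eq]
      refine ⟨by simp, ?_⟩
      simpa using hc
    have hS3 : ((1 - (a : Unitization ℤ A) : Unitization ℤ A) : con.Quotient)
        * ((1 - (x₁ : Unitization ℤ A) : Unitization ℤ A) : con.Quotient) = 1 := by
      rw [← RingCon.coe_mul, u3, RingCon.coe_sub, hcz, sub_zero, RingCon.coe_one]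
    have final := core_lemma altlQ altrQ _ _ _ hS1 hS2 hS3
    rw [RingCon.eq] at final
    have hm := final.2
    have hsnd : (1 - (x₁ : Unitization ℤ A)).snd - (1 - (x₂ : Unitization ℤ A)).snd
        = -(x₁ - x₂) := by
      simp only [sub_eq_add_neg, Unitization.snd_add, Unitization.snd_neg,
        Unitization.snd_one, Unitization.snd_inr]
      abel
    rw [hsnd] at hm
    have := hRneg _ hm
    rwa [neg_neg] at this
end

section
/- Let A be a (not necessarily associative or unital) ring and let {I_s}_{s ∈ S} be a family of two-sided ideals of A, each of which is simple as an ideal of A (that is, I_s ≠ 0 and the only two-sided ideals of A contained in I_s are 0 and I_s). If A = Σ_{s ∈ S} I_s, i.e. every element of A is a finite sum of elements of the ideals I_s, then there is a subset T ⊆ S such that A is the internal direct sum of the family {I_t}_{t ∈ T}: A = Σ_{t ∈ T} I_t and I_t ∩ Σ_{t ≠ t' ∈ T} I_{t'} = 0 for every t ∈ T. -/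
/-- A two-sided ideal `I` of `A` is simple (as an ideal of `A`) if `I ≠ 0` and the only
two-sided ideals of `A` contained in `I` are `0` and `I`. -/
def TwoSidedIdeal.IsSimpleIdeal {A : Type*} [NonUnitalNonAssocRing A]
    (I : TwoSidedIdeal A) : Prop :=
  I ≠ ⊥ ∧ ∀ J : TwoSidedIdeal A, J ≤ I → J = ⊥ ∨ J = I

namespace TwoSidedIdealSimpleAux

variable {A : Type*} [NonUnitalNonAssocRing A]

open TwoSidedIdeal

instance : IsModularLattice (TwoSidedIdeal A) := by
  constructor
  intro x y z xz
  rw [TwoSidedIdeal.le_iff]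
  intro a ha
  rw [SetLike.mem_coe, TwoSidedIdeal.mem_inf A, TwoSidedIdeal.mem_sup] at ha
  obtain ⟨⟨u, hu, v, hv, rfl⟩, h2⟩ := ha
  rw [SetLike.mem_coe, TwoSidedIdeal.mem_sup]
  refine ⟨u, hu, v, (TwoSidedIdeal.mem_inf A).2 ⟨hv, ?_⟩, rfl⟩
  simpa using TwoSidedIdeal.sub_mem z h2 (xz hu)

lemma exists_ne_zero {J : TwoSidedIdeal A} (h : J ≠ ⊥) : ∃ x ∈ J, x ≠ 0 := by
  by_contra hc
  push_neg at hc
  exact h (eq_bot_iff.2 fun x hx => (TwoSidedIdeal.mem_bot A).2 (hc x hx))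

lemma mem_sSup_of_directedOn {d : Set (TwoSidedIdeal A)} (hne : d.Nonempty)
    (hd : DirectedOn (· ≤ ·) d) {x : A} (hx : x ∈ sSup d) : ∃ J ∈ d, x ∈ J := by
  obtain ⟨J0, hJ0⟩ := hne
  set U : Set A := ⋃ J ∈ d, (J : Set A) with hU
  have hz : (0 : A) ∈ U := Set.mem_biUnion hJ0 (TwoSidedIdeal.zero_mem _)
  have hadd : ∀ {a b : A}, a ∈ U → b ∈ U → a + b ∈ U := by
    intro a b ha hb
    obtain ⟨Ja, hJa, ha⟩ := Set.mem_iUnion₂.1 ha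
    obtain ⟨Jb, hJb, hb⟩ := Set.mem_iUnion₂.1 hb
    obtain ⟨Jc, hJc, h1, h2⟩ := hd Ja hJa Jb hJb
    exact Set.mem_biUnion hJc (TwoSidedIdeal.add_mem _ (h1 ha) (h2 hb))
  have hneg : ∀ {a : A}, a ∈ U → -a ∈ U := by
    intro a ha
    obtain ⟨Ja, hJa, ha⟩ := Set.mem_iUnion₂.1 ha
    exact Set.mem_biUnion hJa (TwoSidedIdeal.neg_mem _ ha)
  have hml : ∀ {a b : A}, b ∈ U → a * b ∈ U := by
    intro a b hb
    obtain ⟨Jb, hJb, hb⟩ := Set.mem_iUnion₂.1 hb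
    exact Set.mem_biUnion hJb (TwoSidedIdeal.mul_mem_left _ _ _ hb)
  have hmr : ∀ {a b : A}, a ∈ U → a * b ∈ U := by
    intro a b ha
    obtain ⟨Ja, hJa, ha⟩ := Set.mem_iUnion₂.1 ha
    exact Set.mem_biUnion hJa (TwoSidedIdeal.mul_mem_right _ _ _ ha)
  have hK : sSup d ≤ TwoSidedIdeal.mk' U hz hadd hneg hml hmr := by
    refine sSup_le fun J hJ => ?_
    rw [TwoSidedIdeal.le_iff]
    intro y hy
    exact SetLike.mem_coe.2 <| (TwoSidedIdeal.mem_mk' U hz hadd hneg hml hmr y).2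
      (Set.mem_biUnion hJ hy)
  have := (TwoSidedIdeal.mem_mk' U hz hadd hneg hml hmr x).1 (hK hx)
  obtain ⟨J, hJ, hxJ⟩ := Set.mem_iUnion₂.1 this
  exact ⟨J, hJ, hxJ⟩

lemma isCompact_of_simple {J : TwoSidedIdeal A} (hJ : J.IsSimpleIdeal) :
    IsCompactElement J := by
  rw [CompleteLattice.isCompactElement_iff_le_of_directed_sSup_le]
  intro d hne hd hle
  obtain ⟨x, hxJ, hx0⟩ := exists_ne_zero hJ.1
  obtain ⟨K, hKd, hxK⟩ := mem_sSup_of_directedOn hne hd (hle hxJ)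
  refine ⟨K, hKd, ?_⟩
  have h1 : TwoSidedIdeal.span {x} ≤ J := by
    rw [TwoSidedIdeal.le_iff]
    intro y hy
    exact SetLike.mem_coe.2 <| TwoSidedIdeal.mem_span_iff.1 hy J
      (Set.singleton_subset_iff.2 hxJ)
  have h2 : TwoSidedIdeal.span {x} = J := by
    refine (hJ.2 _ h1).resolve_left fun hbot => hx0 ?_
    have : x ∈ TwoSidedIdeal.span {x} := TwoSidedIdeal.subset_span rfl
    rw [hbot] at this
    exact (TwoSidedIdeal.mem_bot A).1 this
  rw [← h2, TwoSidedIdeal.le_iff]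
  intro y hy
  exact SetLike.mem_coe.2 <| TwoSidedIdeal.mem_span_iff.1 hy K
    (Set.singleton_subset_iff.2 hxK)

lemma le_finset_biSup_of_le_biSup {S : Type*} (I : S → TwoSidedIdeal A)
    {J : TwoSidedIdeal A} (hJ : J.IsSimpleIdeal) {U : Set S}
    (h : J ≤ ⨆ t ∈ U, I t) : ∃ F : Finset S, ↑F ⊆ U ∧ J ≤ ⨆ t ∈ F, I t := by
  classical
  obtain ⟨F0, hF0sub, hF0⟩ := (CompleteLattice.isCompactElement_iff_exists_le_sSup_of_le_sSup _ _).1 (isCompact_of_simple hJ) (I '' U) (by rwa [sSup_image])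
  choose g hgU hgI using fun (K : TwoSidedIdeal A) (hK : K ∈ F0) =>
    (hF0sub hK : K ∈ I '' U)
  refine ⟨F0.attach.image fun K => g K.1 K.2, ?_, ?_⟩
  · intro t ht
    simp only [Finset.coe_image, Set.mem_image, Finset.mem_coe, Finset.mem_attach] at ht
    obtain ⟨K, -, rfl⟩ := ht
    exact hgU _ _
  · refine hF0.trans (Finset.sup_le fun K hK => ?_)
    have : K = I (g K hK) := (hgI K hK).symm
    rw [show id K = I (g K hK) from this]
    exact le_biSup I (Finset.mem_image.2 ⟨⟨K, hK⟩, Finset.mem_attach _ _, rfl⟩)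

end TwoSidedIdealSimpleAux

open TwoSidedIdealSimpleAux in
/-- **Lemma 5.2.**  Let `A` be a (not necessarily associative or unital)
ring and `{I_s}` a family of two-sided ideals of `A`, each simple as an ideal of `A`.
If `A` is the sum of the `I_s`, then there is a subset `T ⊆ S` such that `A` is the
internal direct sum of the family `{I_t}_{t ∈ T}`. -/
theorem sum_simple_ideals_direct {A : Type*} [NonUnitalNonAssocRing A] {S : Type*}
    (I : S → TwoSidedIdeal A)
    (hsimple : ∀ s : S, (I s).IsSimpleIdeal)
    (hsum : (⨆ s : S, I s) = ⊤) :
    ∃ T : Set S, (⨆ t ∈ T, I t) = ⊤ ∧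
      ∀ t ∈ T, (I t) ⊓ (⨆ t' ∈ {t' : S | t' ∈ T ∧ t' ≠ t}, I t') = ⊥ := by
  set P : Set (Set S) :=
    {T | ∀ t ∈ T, Disjoint (I t) (⨆ t' ∈ {t' : S | t' ∈ T ∧ t' ≠ t}, I t')} with hP
  have hchains : ∀ c ⊆ P, IsChain (· ⊆ ·) c → ∃ ub ∈ P, ∀ s ∈ c, s ⊆ ub := by
    intro c hcP hchain
    refine ⟨⋃₀ c, ?_, fun T hT => Set.subset_sUnion_of_mem hT⟩
    intro t ht
    obtain ⟨T0, hT0c, htT0⟩ := ht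
    by_contra hnd
    have hne : I t ⊓ (⨆ t' ∈ {t' : S | t' ∈ ⋃₀ c ∧ t' ≠ t}, I t') ≠ ⊥ :=
      fun h => hnd (disjoint_iff.2 h)
    have h2 := ((hsimple t).2 _ (inf_le_left (b := ⨆ t' ∈ {t' : S | t' ∈ ⋃₀ c ∧ t' ≠ t}, I t'))).resolve_left hne
    have hle : I t ≤ ⨆ t' ∈ {t' : S | t' ∈ ⋃₀ c ∧ t' ≠ t}, I t' := inf_eq_left.1 h2
    obtain ⟨F, hFsub, hFle⟩ := le_finset_biSup_of_le_biSup I (hsimple t) hle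
    have hdir : DirectedOn (· ⊆ ·) c := hchain.directedOn
    haveI : Nonempty c := ⟨⟨T0, hT0c⟩⟩
    have hdir' : Directed (· ⊆ ·) (fun T : c => (T : Set S)) :=
      directedOn_iff_directed.1 hdir
    obtain ⟨T1, hFT1⟩ := hdir'.exists_mem_subset_of_finset_subset_biUnion
      (s := F) (by
        intro f hf
        have := (hFsub hf).1
        rw [Set.sUnion_eq_iUnion] at this
        exact this)
    obtain ⟨T2, hT2c, hT02, hT12⟩ := hdir T0 hT0c T1 T1.2
    have hle2 : I t ≤ ⨆ t' ∈ {t' : S | t' ∈ T2 ∧ t' ≠ t}, I t' :=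
      hFle.trans (biSup_mono fun f hf => ⟨hT12 (hFT1 hf), (hFsub hf).2⟩)
    have hdisj := hcP hT2c t (hT02 htT0)
    exact (hsimple t).1 (hdisj.eq_bot_of_le hle2)
  obtain ⟨T, hTmax⟩ := zorn_subset P hchains
  have hPT := hTmax.1
  have htop : (⨆ t ∈ T, I t) = ⊤ := by
    rw [← top_le_iff, ← hsum]
    refine iSup_le fun s => ?_
    by_contra hs
    have hdisj : Disjoint (I s) (⨆ t ∈ T, I t) := by
      rcases (hsimple s).2 _ (inf_le_left (b := ⨆ t ∈ T, I t)) with h | h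
      · exact disjoint_iff.2 h
      · exact absurd (inf_eq_left.1 h) hs
    have hsT : s ∉ T := fun hsT => hs (le_biSup I hsT)
    have hins : insert s T ∈ P := by
      intro t ht
      rcases Set.mem_insert_iff.1 ht with rfl | htT
      · refine hdisj.mono_right (biSup_mono ?_)
        rintro t' ⟨ht', hne⟩
        exact (Set.mem_insert_iff.1 ht').resolve_left hne
      · have hts : t ≠ s := fun h => hsT (h ▸ htT)
        have hset : {t' : S | t' ∈ insert s T ∧ t' ≠ t}
            = insert s {t' : S | t' ∈ T ∧ t' ≠ t} := by
          ext t'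
          simp only [Set.mem_insert_iff, Set.mem_setOf_eq]
          constructor
          · rintro ⟨h1 | h1, h2⟩
            · exact Or.inl h1
            · exact Or.inr ⟨h1, h2⟩
          · rintro (rfl | ⟨h1, h2⟩)
            · exact ⟨Or.inl rfl, hts.symm⟩
            · exact ⟨Or.inr h1, h2⟩
        rw [hset, iSup_insert, sup_comm]
        refine Disjoint.disjoint_sup_right_of_disjoint_sup_left (hPT t htT) ?_
        refine (hdisj.mono_right ?_).symm
        exact sup_le (le_biSup I htT) (biSup_mono fun t' ht' => ht'.1)
    exact hsT (hTmax.2 hins (Set.subset_insert s T) (Set.mem_insert s T))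
  exact ⟨T, htop, fun t ht => disjoint_iff.1 (hPT t ht)⟩
end

section
/- Let A be a unital alternative ring, let m ≥ 1, and let u, v, w ∈ A satisfy u^m = v^m = w^m = 0, where powers are defined by x^0 = 1 and x^{i+1} = x·x^i. Put S(x) = 1 + x + ⋯ + x^{m−1}, a = 1 − u, b = 1 − v, c = 1 − w, and write (x, y, z) = (xy)z − x(yz) for the associator. Then (ab)c = (a(bc))·(1 − ((S(w)S(v))S(u))·(u, v, w)), i.e. the loop associator of a, b, c in the loop of invertible elements equals 1 − ((S(w)S(v))S(u))(u, v, w); and ab = (ba)·(1 + (S(u)S(v))·(uv − vu)), i.e. the loop commutator of a, b equals 1 + (S(u)S(v))(uv − vu). -/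
/-- Powers in a unital (not necessarily associative) ring: `x^0 = 1`,
`x^(i+1) = x * x^i`. -/
def npowNA {A : Type*} [NonAssocRing A] (x : A) : ℕ → A
  | 0 => 1
  | n + 1 => x * npowNA x n

/-- The partial geometric sum `S(x) = 1 + x + ⋯ + x^(m-1)`. -/
def geomS {A : Type*} [NonAssocRing A] (m : ℕ) (x : A) : A :=
  ∑ i ∈ Finset.range m, npowNA x i

/-- The associator `(x, y, z) = (xy)z - x(yz)`. -/
def assocNA {A : Type*} [NonAssocRing A] (x y z : A) : A := x * y * z - x * (y * z)

section AltDev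

variable {A : Type*} [NonAssocRing A]

theorem npowNA_zero (x : A) : npowNA x 0 = 1 := rfl

theorem npowNA_succ (x : A) (n : ℕ) : npowNA x (n + 1) = x * npowNA x n := rfl

/-- Teichmüller identity: valid in any nonassociative ring. -/
theorem as_teich (a b c d : A) :
    assocNA (a*b) c d - assocNA a (b*c) d + assocNA a b (c*d)
      = a * assocNA b c d + assocNA a b c * d := by
  simp only [assocNA, mul_sub, sub_mul]
  abel

theorem as_aa (altl : ∀ x y : A, x * (x * y) = (x * x) * y) (x y : A) :
    assocNA x x y = 0 := by
  simp [assocNA, altl x y]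

theorem as_bb (altr : ∀ x y : A, (y * x) * x = y * (x * x)) (x y : A) :
    assocNA x y y = 0 := by
  simp [assocNA, altr y x]

theorem as_sw12 (altl : ∀ x y : A, x * (x * y) = (x * x) * y) (x y z : A) :
    assocNA y x z = - assocNA x y z := by
  have h : assocNA x y z + assocNA y x z
      = assocNA (x+y) (x+y) z - assocNA x x z - assocNA y y z := by
    simp only [assocNA, add_mul, mul_add]
    abel
  rw [as_aa altl (x+y) z, as_aa altl x z, as_aa altl y z] at h
  have h2 : assocNA x y z + assocNA y x z = 0 := by simpa using h
  linear_combination (norm := abel) h2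

theorem as_sw23 (altr : ∀ x y : A, (y * x) * x = y * (x * x)) (x y z : A) :
    assocNA x z y = - assocNA x y z := by
  have h : assocNA x y z + assocNA x z y
      = assocNA x (y+z) (y+z) - assocNA x y y - assocNA x z z := by
    simp only [assocNA, add_mul, mul_add]
    abel
  rw [as_bb altr x (y+z), as_bb altr x y, as_bb altr x z] at h
  have h2 : assocNA x y z + assocNA x z y = 0 := by simpa using h
  linear_combination (norm := abel) h2

theorem as_flex (altl : ∀ x y : A, x * (x * y) = (x * x) * y)
    (altr : ∀ x y : A, (y * x) * x = y * (x * x)) (x y : A) : assocNA x y x = 0 := by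
  rw [as_sw23 altr x x y, as_aa altl x y, neg_zero]

theorem flexEq (altl : ∀ x y : A, x * (x * y) = (x * x) * y)
    (altr : ∀ x y : A, (y * x) * x = y * (x * x)) (x y : A) : (x * y) * x = x * (y * x) := by
  have h := as_flex altl altr x y
  simp only [assocNA] at h
  rw [sub_eq_zero] at h
  exact h

theorem asP1 (altl : ∀ x y : A, x * (x * y) = (x * x) * y)
    (altr : ∀ x y : A, (y * x) * x = y * (x * x)) (x a b : A) :
    assocNA (x*a) x b = x * assocNA x a b - assocNA (x*x) a b := by
  have s1 : assocNA x (x*a) b = -assocNA (x*a) x b := as_sw12 altl (x*a) x b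
  have z1 : assocNA x x (a*b) = 0 := as_aa altl x (a*b)
  have z2 : assocNA x x a * b = 0 := by rw [as_aa altl x a, zero_mul]
  linear_combination (norm := abel) as_teich x x a b + s1 - z1 + z2

theorem asP4 (altl : ∀ x y : A, x * (x * y) = (x * x) * y)
    (altr : ∀ x y : A, (y * x) * x = y * (x * x)) (x a b : A) :
    assocNA (x*b) x a = assocNA (x*x) a b - x * assocNA x a b := by
  have sB : assocNA x (x*b) a = -assocNA (x*b) x a := as_sw12 altl (x*b) x a
  have sB1 : assocNA (x*x) b a = -assocNA (x*x) a b := as_sw23 altr (x*x) a b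
  have hm : x * assocNA x b a = -(x * assocNA x a b) := by
    rw [as_sw23 altr x a b, mul_neg]
  have z3 : assocNA x x (b*a) = 0 := as_aa altl x (b*a)
  have z4 : assocNA x x b * a = 0 := by rw [as_aa altl x b, zero_mul]
  linear_combination (norm := abel) as_teich x x b a + sB - sB1 + hm - z3 + z4

theorem asP2 (altl : ∀ x y : A, x * (x * y) = (x * x) * y)
    (altr : ∀ x y : A, (y * x) * x = y * (x * x)) (x a b : A) :
    assocNA (a*x) x b = -(x * assocNA x a b) := by
  have f1 : assocNA a (x*x) b = -assocNA (x*x) a b := as_sw12 altl (x*x) a b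
  have f2 : assocNA a x (x*b) = -assocNA x a (x*b) := as_sw12 altl x a (x*b)
  have c' : assocNA x a (x*b) = -assocNA x (x*b) a := as_sw23 altr x (x*b) a
  have b2 : assocNA x (x*b) a = -assocNA (x*b) x a := as_sw12 altl (x*b) x a
  have p4 := asP4 altl altr x a b
  have az : a * assocNA x x b = 0 := by rw [as_aa altl x b, mul_zero]
  have zby : assocNA a x x * b = 0 := by rw [as_bb altr a x, zero_mul]
  linear_combination (norm := abel) as_teich a x x b + f1 - f2 + c' - b2 + p4 + az + zby

theorem asP5 (altl : ∀ x y : A, x * (x * y) = (x * x) * y)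
    (altr : ∀ x y : A, (y * x) * x = y * (x * x)) (x a b : A) :
    assocNA (b*x) x a = x * assocNA x a b := by
  have h1a : assocNA b (x*x) a = -assocNA (x*x) b a := as_sw12 altl (x*x) b a
  have h1b : assocNA (x*x) b a = -assocNA (x*x) a b := as_sw23 altr (x*x) a b
  have h2a : assocNA b x (x*a) = -assocNA x b (x*a) := as_sw12 altl x b (x*a)
  have h2b : assocNA x b (x*a) = -assocNA x (x*a) b := as_sw23 altr x (x*a) b
  have h2c : assocNA x (x*a) b = -assocNA (x*a) x b := as_sw12 altl (x*a) x b
  have p1 := asP1 altl altr x a b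
  have bz : b * assocNA x x a = 0 := by rw [as_aa altl x a, mul_zero]
  have zca : assocNA b x x * a = 0 := by rw [as_bb altr b x, zero_mul]
  linear_combination (norm := abel)
    as_teich b x x a + h1a - h1b + h2b - h2c - h2a + p1 + bz + zca

theorem leftMoufang (altl : ∀ x y : A, x * (x * y) = (x * x) * y)
    (altr : ∀ x y : A, (y * x) * x = y * (x * x)) (x a b : A) : ((x*a)*x)*b = x*(a*(x*b)) := by
  have hexp : ((x*a)*x)*b = x*(a*(x*b)) + assocNA (x*a) x b + assocNA x a (x*b) := by
    simp only [assocNA]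
    abel
  have c' : assocNA x a (x*b) = -assocNA x (x*b) a := as_sw23 altr x (x*b) a
  have b2 : assocNA x (x*b) a = -assocNA (x*b) x a := as_sw12 altl (x*b) x a
  have p1 := asP1 altl altr x a b
  have p4 := asP4 altl altr x a b
  rw [hexp]
  linear_combination (norm := abel) p1 + c' - b2 + p4

theorem rightMoufang (altl : ∀ x y : A, x * (x * y) = (x * x) * y)
    (altr : ∀ x y : A, (y * x) * x = y * (x * x)) (x a b : A) : ((b*x)*a)*x = b*((x*a)*x) := by
  have hexp : ((b*x)*a)*x = b*(x*(a*x)) + assocNA (b*x) a x + assocNA b x (a*x) := by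
    simp only [assocNA]
    abel
  have dd : assocNA (b*x) a x = -assocNA (b*x) x a := as_sw23 altr (b*x) x a
  have ea : assocNA b x (a*x) = -assocNA x b (a*x) := as_sw12 altl x b (a*x)
  have qb : assocNA x b (a*x) = -assocNA x (a*x) b := as_sw23 altr x (a*x) b
  have qc : assocNA x (a*x) b = -assocNA (a*x) x b := as_sw12 altl (a*x) x b
  have p5 := asP5 altl altr x a b
  have p2 := asP2 altl altr x a b
  have hfl : (x*a)*x = x*(a*x) := flexEq altl altr x a
  rw [hexp, ← hfl]
  linear_combination (norm := abel) dd + ea - qb + qc - p5 - p2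

theorem midMoufang (altl : ∀ x y : A, x * (x * y) = (x * x) * y)
    (altr : ∀ x y : A, (y * x) * x = y * (x * x)) (x y z : A) : (x*y)*(z*x) = x*((y*z)*x) := by
  have hexp : (x*y)*(z*x) = (x*(y*z))*x + assocNA x y z * x - assocNA (x*y) z x := by
    simp only [assocNA, sub_mul]
    abel
  have fl : assocNA x (y*z) x = 0 := as_flex altl altr x (y*z)
  have na : assocNA x y (z*x) = -assocNA x (z*x) y := as_sw23 altr x (z*x) y
  have nb : assocNA x (z*x) y = -assocNA (z*x) x y := as_sw12 altl (z*x) x y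
  have p5 := asP5 altl altr x y z
  have mchain : x * assocNA y z x = x * assocNA x y z := by
    rw [as_sw23 altr y x z, as_sw12 altl x y z, neg_neg]
  rw [hexp, flexEq altl altr x (y*z)]
  linear_combination (norm := abel)
    (-1 : ℤ) • (as_teich x y z x) - fl + na - nb + p5 - mchain

/-- Left inverse property. -/
theorem lip (altl : ∀ x y : A, x * (x * y) = (x * x) * y)
    (altr : ∀ x y : A, (y * x) * x = y * (x * x)) (x y : A) (hxy : x * y = 1) (hyx : y * x = 1) (z : A) :
    y * (x * z) = z := by
  have hy2 : x * (y*y) = y := by rw [← altr y x, hxy, one_mul]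
  have key : ∀ t : A, x * ((y*y) * (x * t)) = t := by
    intro t
    have h := leftMoufang altl altr x (y*y) t
    rw [hy2, hyx, one_mul] at h
    exact h.symm
  have h1 : x * (y * (x * z)) = x * z := by
    have h := leftMoufang altl altr x y z
    rw [hxy, one_mul] at h
    exact h.symm
  calc y * (x * z) = x * ((y*y) * (x * (y * (x*z)))) := (key _).symm
    _ = x * ((y*y) * (x * z)) := by rw [h1]
    _ = z := key z

/-- Right inverse property. -/
theorem rip (altl : ∀ x y : A, x * (x * y) = (x * x) * y)
    (altr : ∀ x y : A, (y * x) * x = y * (x * x)) (x y : A) (hxy : x * y = 1) (hyx : y * x = 1) (z : A) :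
    (z * x) * y = z := by
  have hy2 : x * (y*y) = y := by rw [← altr y x, hxy, one_mul]
  have key : ∀ t : A, ((t*x)*(y*y))*x = t := by
    intro t
    have h := rightMoufang altl altr x (y*y) t
    rw [hy2, hyx, mul_one] at h
    exact h
  have h1 : ((z*x)*y)*x = z*x := by
    have h := rightMoufang altl altr x y z
    rw [hxy, one_mul] at h
    exact h
  calc (z*x)*y = ((((z*x)*y)*x)*(y*y))*x := (key _).symm
    _ = ((z*x)*(y*y))*x := by rw [h1]
    _ = z := key z

/-- Inverse of a product: `(pq)⁻¹ = q⁻¹ p⁻¹`. -/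
theorem inv_prod (altl : ∀ x y : A, x * (x * y) = (x * x) * y)
    (altr : ∀ x y : A, (y * x) * x = y * (x * x)) (p p' q q' : A) (hp : p * p' = 1) (hp' : p' * p = 1)
    (hq : q * q' = 1) (hq' : q' * q = 1) :
    (p*q) * (q'*p') = 1 ∧ (q'*p') * (p*q) = 1 := by
  constructor
  · have hz : (q'*p')*p' = q'*(p'*p') := altr p' q'
    have hzp : (q'*(p'*p'))*p = q'*p' := by
      rw [← hz]
      exact rip altl altr p' p hp' hp (q'*p')
    have hm := midMoufang altl altr p q (q'*(p'*p'))
    rw [hzp] at hm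
    have hqz : q*(q'*(p'*p')) = p'*p' := lip altl altr q' q hq' hq (p'*p')
    rw [hqz] at hm
    have hpp : (p'*p')*p = p' := by rw [← altl p' p, hp', mul_one]
    rw [hpp] at hm
    rw [hm]
    exact hp
  · have hz : (p*q)*q = p*(q*q) := altr q p
    have hzq : (p*(q*q))*q' = p*q := by
      rw [← hz]
      exact rip altl altr q q' hq hq' (p*q)
    have hm := midMoufang altl altr q' p' (p*(q*q))
    rw [hzq] at hm
    have hpz : p'*(p*(q*q)) = q*q := lip altl altr p p' hp hp' (q*q)
    rw [hpz] at hm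
    have hqq : (q*q)*q' = q := by rw [← altl q q', hq, mul_one]
    rw [hqq] at hm
    rw [hm]
    exact hq'

theorem npowNA_mul_comm (altl : ∀ x y : A, x * (x * y) = (x * x) * y)
    (altr : ∀ x y : A, (y * x) * x = y * (x * x)) (x : A) : ∀ n : ℕ, npowNA x n * x = x * npowNA x n := by
  intro n
  induction n with
  | zero =>
    show (1:A) * x = x * 1
    rw [one_mul, mul_one]
  | succ n ih =>
    show (x * npowNA x n) * x = x * (x * npowNA x n)
    rw [flexEq altl altr x (npowNA x n), ih]

theorem geom_mul_left (m : ℕ) (x : A) :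
    (1 - x) * geomS m x = 1 - npowNA x m := by
  have h1 : (1-x) * geomS m x = ∑ i ∈ Finset.range m, (npowNA x i - npowNA x (i+1)) := by
    rw [geomS, sub_mul, one_mul, Finset.mul_sum, ← Finset.sum_sub_distrib]
    exact Finset.sum_congr rfl (fun i _ => by rw [npowNA_succ])
  rw [h1, Finset.sum_range_sub' (fun i => npowNA x i) m, npowNA_zero]

theorem geom_mul_right (altl : ∀ x y : A, x * (x * y) = (x * x) * y)
    (altr : ∀ x y : A, (y * x) * x = y * (x * x)) (m : ℕ) (x : A) :
    geomS m x * (1 - x) = 1 - npowNA x m := by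
  have h1 : geomS m x * (1-x) = ∑ i ∈ Finset.range m, (npowNA x i - npowNA x (i+1)) := by
    rw [geomS, mul_sub, mul_one, Finset.sum_mul, ← Finset.sum_sub_distrib]
    exact Finset.sum_congr rfl
      (fun i _ => by rw [npowNA_succ, npowNA_mul_comm altl altr])
  rw [h1, Finset.sum_range_sub' (fun i => npowNA x i) m, npowNA_zero]

end AltDev

/-- **Lemma 7.4.**  Let `A` be a unital alternative ring, `m ≥ 1` and
`u, v, w ∈ A` with `u^m = v^m = w^m = 0`.  With `S(x) = 1 + x + ⋯ + x^(m−1)`,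
`a = 1 − u`, `b = 1 − v`, `c = 1 − w`, we have
`(ab)c = (a(bc))·(1 − ((S(w)S(v))S(u))·(u,v,w))` and
`ab = (ba)·(1 + (S(u)S(v))·(uv − vu))`. -/
theorem loop_associator_commutator {A : Type*} [NonAssocRing A]
    (altl : ∀ x y : A, x * (x * y) = (x * x) * y)
    (altr : ∀ x y : A, (y * x) * x = y * (x * x))
    (m : ℕ) (hm : 1 ≤ m) (u v w : A)
    (hu : npowNA u m = 0) (hv : npowNA v m = 0) (hw : npowNA w m = 0) :
    ((1 - u) * (1 - v)) * (1 - w) =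
      ((1 - u) * ((1 - v) * (1 - w))) *
        (1 - ((geomS m w * geomS m v) * geomS m u) * assocNA u v w) ∧
    (1 - u) * (1 - v) =
      ((1 - v) * (1 - u)) * (1 + (geomS m u * geomS m v) * (u * v - v * u)) := by
  have hu1 : (1 - u) * geomS m u = 1 := by rw [geom_mul_left, hu, sub_zero]
  have hu2 : geomS m u * (1 - u) = 1 := by rw [geom_mul_right altl altr, hu, sub_zero]
  have hv1 : (1 - v) * geomS m v = 1 := by rw [geom_mul_left, hv, sub_zero]
  have hv2 : geomS m v * (1 - v) = 1 := by rw [geom_mul_right altl altr, hv, sub_zero]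
  have hw1 : (1 - w) * geomS m w = 1 := by rw [geom_mul_left, hw, sub_zero]
  have hw2 : geomS m w * (1 - w) = 1 := by rw [geom_mul_right altl altr, hw, sub_zero]
  obtain ⟨hbc1, hbc2⟩ := inv_prod altl altr (1-v) (geomS m v) (1-w) (geomS m w)
    hv1 hv2 hw1 hw2
  obtain ⟨hX1, hX2⟩ := inv_prod altl altr (1-u) (geomS m u) ((1-v)*(1-w))
    (geomS m w * geomS m v) hu1 hu2 hbc1 hbc2
  obtain ⟨hY1, hY2⟩ := inv_prod altl altr (1-v) (geomS m v) (1-u) (geomS m u)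
    hv1 hv2 hu1 hu2
  constructor
  · have hlip1 := lip altl altr ((geomS m w * geomS m v) * geomS m u)
      ((1-u)*((1-v)*(1-w))) hX2 hX1 (assocNA u v w)
    conv_rhs => rw [mul_sub, mul_one, hlip1]
    simp only [assocNA, mul_sub, sub_mul, mul_one, one_mul]
    abel
  · have hlip2 := lip altl altr (geomS m u * geomS m v)
      ((1-v)*(1-u)) hY2 hY1 (u*v - v*u)
    conv_rhs => rw [mul_add, mul_one, hlip2]
    simp only [mul_sub, sub_mul, mul_one, one_mul]
    abel
end
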